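/- arXiv:2202.06311 — 6 statements merged into one kernel-verified Lean document; each statement's English description precedes it below -/
import Mathlib

section
/- If v ≥ (27ρ² − 3ρ + 60)/2, then every (v,4)-packing whose maximum partial parallel class has size ρ has at most ρv/3 − ρ(ρ+1)/6 blocks; i.e., β(ρ,v,4) ≤ ρv/3 − ρ(ρ+1)/6. -/
/-- A `(v,k)`-packing: a family of `k`-subsets of a `v`-set such that
every pair of points occurs in at most one block. -/
def IsPacking (v k : ℕ) (B : Finset (Finset (Fin v))) : Prop :=
  (∀ b ∈ B, b.card = k) ∧
    ∀ b₁ ∈ B, ∀ b₂ ∈ B, b₁ ≠ b₂ → (b₁ ∩ b₂).card ≤ 1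

/-- A partial parallel class: a set of pairwise disjoint blocks of the packing. -/
def IsPPC {v : ℕ} (B P : Finset (Finset (Fin v))) : Prop :=
  P ⊆ B ∧ ∀ b₁ ∈ P, ∀ b₂ ∈ P, b₁ ≠ b₂ → Disjoint b₁ b₂

/-- The maximum PPC of `B` has size `ρ`. -/
def MaxPPCSize {v : ℕ} (B : Finset (Finset (Fin v))) (ρ : ℕ) : Prop :=
  (∃ P, IsPPC B P ∧ P.card = ρ) ∧ ∀ P, IsPPC B P → P.card ≤ ρ

/-- `β(ρ,v,k)`: the maximum number of blocks in a `(v,k)`-packing whose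
maximum partial parallel class has size `ρ`. -/
noncomputable def beta (ρ v k : ℕ) : ℕ :=
  sSup {b | ∃ B : Finset (Finset (Fin v)),
    IsPacking v k B ∧ MaxPPCSize B ρ ∧ B.card = b}

/-- The packing number `D(v,k)`. -/
noncomputable def packingNumber (v k : ℕ) : ℕ :=
  sSup {b | ∃ B : Finset (Finset (Fin v)), IsPacking v k B ∧ B.card = b}

open Finset

namespace Pf14

variable {v : ℕ} {B P : Finset (Finset (Fin v))}

/-- union of the blocks of the max PPC -/
def SS (P : Finset (Finset (Fin v))) : Finset (Fin v) := P.biUnion id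

/-- singleton blocks attached at `x` -/
def Sing (B P : Finset (Finset (Fin v))) (x : Fin v) : Finset (Finset (Fin v)) :=
  B.filter (fun c => c ∩ SS P = {x})

lemma card4 (hB : IsPacking v 4 B) {b} (hb : b ∈ B) : b.card = 4 := hB.1 b hb

lemma pair_le (hB : IsPacking v 4 B) {c d} (hc : c ∈ B) (hd : d ∈ B) (h : c ≠ d) :
    (c ∩ d).card ≤ 1 := hB.2 c hc d hd h

lemma Pdisj (hP : IsPPC B P) {b b'} (hb : b ∈ P) (hb' : b' ∈ P) (h : b ≠ b') :
    Disjoint b b' := hP.2 b hb b' hb' h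

lemma subset_SS {b} (hb : b ∈ P) : b ⊆ SS P := fun x hx => mem_biUnion.2 ⟨b, hb, hx⟩

lemma mem_SS {x} (hx : x ∈ SS P) : ∃ b ∈ P, x ∈ b := by
  simpa using mem_biUnion.1 hx

lemma card_SS (hB : IsPacking v 4 B) (hP : IsPPC B P) : (SS P).card = 4 * P.card := by
  have h : (SS P).card = ∑ b ∈ P, (id b).card :=
    card_biUnion (fun b hb b' hb' h => Pdisj hP hb hb' h)
  rw [h]
  have h2 : ∀ b ∈ P, (id b).card = 4 := fun b hb => card4 hB (hP.1 hb)
  rw [Finset.sum_congr rfl h2, Finset.sum_const, smul_eq_mul, mul_comm]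

lemma sing_mem_B {x c} (hc : c ∈ Sing B P x) : c ∈ B := (mem_filter.1 hc).1

lemma sing_inter {x c} (hc : c ∈ Sing B P x) : c ∩ SS P = {x} := (mem_filter.1 hc).2

lemma sing_mem_x {x c} (hc : c ∈ Sing B P x) : x ∈ c := by
  have h := sing_inter hc
  have : x ∈ c ∩ SS P := h ▸ mem_singleton_self x
  exact (mem_inter.1 this).1

lemma sing_x_mem_SS {x c} (hc : c ∈ Sing B P x) : x ∈ SS P := by
  have h := sing_inter hc
  have : x ∈ c ∩ SS P := h ▸ mem_singleton_self x
  exact (mem_inter.1 this).2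

lemma sing_not_mem_P (hB : IsPacking v 4 B) (hP : IsPPC B P) {x c}
    (hc : c ∈ Sing B P x) : c ∉ P := by
  intro hcP
  have h1 : c ∩ SS P = c := inter_eq_left.2 (subset_SS hcP)
  have := sing_inter hc
  rw [h1] at this
  have := congrArg Finset.card this
  rw [card4 hB (hP.1 hcP), card_singleton] at this
  omega

/-- two distinct singleton blocks at `x` meet exactly in `x` -/
lemma sing_inter_eq (hB : IsPacking v 4 B) {x c c'} (hc : c ∈ Sing B P x)
    (hc' : c' ∈ Sing B P x) (h : c ≠ c') : c ∩ c' = {x} := by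
  have hx : x ∈ c ∩ c' := mem_inter.2 ⟨sing_mem_x hc, sing_mem_x hc'⟩
  have hle := pair_le hB (sing_mem_B hc) (sing_mem_B hc') h
  exact Finset.eq_singleton_iff_unique_mem.2 ⟨hx, fun y hy => by
    by_contra hne
    have : ({y, x} : Finset (Fin v)) ⊆ c ∩ c' := by
      intro z hz; rcases mem_insert.1 hz with rfl | hz
      · exact hy
      · exact (mem_singleton.1 hz) ▸ hx
    have h2 : ({y, x} : Finset (Fin v)).card = 2 := card_pair hne
    have := card_le_card this
    omega⟩

lemma sing_tail_card (hB : IsPacking v 4 B) {x c} (hc : c ∈ Sing B P x) :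
    (c \ SS P).card = 3 := by
  have h1 : (c ∩ SS P).card + (c \ SS P).card = c.card := by
    rw [← card_inter_add_card_sdiff c (SS P)]
  rw [sing_inter hc, card_singleton, card4 hB (sing_mem_B hc)] at h1
  omega

/-- number of singleton blocks at `x` whose tail meets `F` is at most `F.card` -/
lemma sing_bad_card (hB : IsPacking v 4 B) (x : Fin v) (F : Finset (Fin v)) :
    ((Sing B P x).filter (fun q => ¬ Disjoint (q \ SS P) F)).card ≤ F.card := by
  classical
  apply Finset.card_le_card_of_injOn
    (fun q => if h : ((q \ SS P) ∩ F).Nonempty then h.choose else x)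
  · intro q hq
    rw [mem_coe, mem_filter] at hq
    have hne : ((q \ SS P) ∩ F).Nonempty := not_disjoint_iff_nonempty_inter.1 hq.2
    simp only [dif_pos hne]
    exact (mem_inter.1 hne.choose_spec).2
  · intro q hq q' hq' heq
    rw [mem_coe, mem_filter] at hq hq'
    by_contra hne
    have h1 : ((q \ SS P) ∩ F).Nonempty := not_disjoint_iff_nonempty_inter.1 hq.2
    have h2 : ((q' \ SS P) ∩ F).Nonempty := not_disjoint_iff_nonempty_inter.1 hq'.2
    simp only [dif_pos h1, dif_pos h2] at heq
    set p := h1.choose with hp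
    have hpq : p ∈ q \ SS P := (mem_inter.1 h1.choose_spec).1
    have hpq' : p ∈ q' \ SS P := heq ▸ (mem_inter.1 h2.choose_spec).1
    have hcc : q ∩ q' = {x} := sing_inter_eq hB hq.1 hq'.1 hne
    have : p ∈ q ∩ q' := mem_inter.2 ⟨(mem_sdiff.1 hpq).1, (mem_sdiff.1 hpq').1⟩
    rw [hcc, mem_singleton] at this
    exact (mem_sdiff.1 hpq).2 (this ▸ sing_x_mem_SS hq.1)

/-- helper to extend a pairwise-disjoint family -/
lemma ppc_step {c : Finset (Fin v)} {Q : Finset (Finset (Fin v))}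
    (h1 : ∀ e ∈ Q, e ≠ c → Disjoint c e)
    (h2 : ∀ e₁ ∈ Q, ∀ e₂ ∈ Q, e₁ ≠ e₂ → Disjoint e₁ e₂) :
    ∀ e₁ ∈ insert c Q, ∀ e₂ ∈ insert c Q, e₁ ≠ e₂ → Disjoint e₁ e₂ := by
  intro e₁ he₁ e₂ he₂ hne
  rcases mem_insert.1 he₁ with he₁ | he₁ <;> rcases mem_insert.1 he₂ with he₂ | he₂
  · exact absurd (he₁.trans he₂.symm) hne
  · exact he₁ ▸ h1 e₂ he₂ (fun h => hne (by rw [he₁, h]))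
  · exact (he₂ ▸ h1 e₁ he₁ (fun h => hne (by rw [he₂, h]))).symm
  · exact h2 e₁ he₁ e₂ he₂ hne

section Max
variable (hB : IsPacking v 4 B) (hP : IsPPC B P)
  (hmax : ∀ Q, IsPPC B Q → Q.card ≤ P.card)

include hB hP hmax

/-- every block meets the union of the maximum PPC -/
lemma meet_SS {c} (hc : c ∈ B) : (c ∩ SS P).Nonempty := by
  rw [← not_disjoint_iff_nonempty_inter]
  intro hdis
  have hcP : c ∉ P := by
    intro hcP
    have hsub : c ⊆ SS P := subset_SS hcP
    have hcc : Disjoint c c := disjoint_of_subset_right hsub hdis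
    have : c = ∅ := disjoint_self.1 hcc
    have hc4 := card4 hB hc
    rw [this] at hc4; simp at hc4
  have hQ : IsPPC B (insert c P) := by
    refine ⟨fun b hb => ?_, ppc_step (fun e he _ => ?_) hP.2⟩
    · rcases mem_insert.1 hb with rfl | hb
      · exact hc
      · exact hP.1 hb
    · exact disjoint_left.2 fun a ha ha' => (disjoint_left.1 hdis) ha (subset_SS he ha')
  have := hmax _ hQ
  rw [card_insert_of_notMem hcP] at this
  omega

omit hB hmax in
/-- a block whose `SS`-trace is a single point of `b ∈ P` is disjoint from the
other blocks of `P` -/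
lemma sing_disj_other {b e q : Finset (Fin v)} {z : Fin v} (hb : b ∈ P)
    (he : e ∈ P) (hne : e ≠ b) (hq : q ∩ SS P = {z}) (hz : z ∈ b) :
    Disjoint q e := by
  refine disjoint_left.2 fun a ha ha' => ?_
  have haS : a ∈ q ∩ SS P := mem_inter.2 ⟨ha, subset_SS he ha'⟩
  rw [hq, mem_singleton] at haS
  subst haS
  exact (disjoint_left.1 (Pdisj hP he hb hne)) ha' hz

/-- meet lemma: singleton blocks at distinct points of the same PPC block intersect -/
lemma sing_meet {b x y c d} (hb : b ∈ P) (hx : x ∈ b) (hy : y ∈ b) (hxy : x ≠ y)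
    (hc : c ∈ Sing B P x) (hd : d ∈ Sing B P y) : ¬ Disjoint c d := by
  intro hdis
  have hcd : c ≠ d := by
    intro h; subst h
    have h1 := sing_inter hc; have h2 := sing_inter hd
    rw [h1] at h2; exact hxy (singleton_injective h2)
  have hcP := sing_not_mem_P hB hP hc
  have hdP := sing_not_mem_P hB hP hd
  have herased : ∀ e₁ ∈ P.erase b, ∀ e₂ ∈ P.erase b, e₁ ≠ e₂ → Disjoint e₁ e₂ :=
    fun e₁ h₁ e₂ h₂ hne => Pdisj hP (mem_of_mem_erase h₁) (mem_of_mem_erase h₂) hne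
  have hstep1 : ∀ e₁ ∈ insert d (P.erase b), ∀ e₂ ∈ insert d (P.erase b),
      e₁ ≠ e₂ → Disjoint e₁ e₂ := by
    refine ppc_step (fun e he _ => ?_) herased
    exact sing_disj_other hP hb (mem_of_mem_erase he) (ne_of_mem_erase he)
      (sing_inter hd) hy
  have hstep2 : ∀ e₁ ∈ insert c (insert d (P.erase b)),
      ∀ e₂ ∈ insert c (insert d (P.erase b)), e₁ ≠ e₂ → Disjoint e₁ e₂ := by
    refine ppc_step (fun e he _ => ?_) hstep1
    rcases mem_insert.1 he with rfl | he
    · exact hdis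
    · exact sing_disj_other hP hb (mem_of_mem_erase he) (ne_of_mem_erase he)
        (sing_inter hc) hx
  have hQ : IsPPC B (insert c (insert d (P.erase b))) := by
    refine ⟨fun e he => ?_, hstep2⟩
    rcases mem_insert.1 he with rfl | he
    · exact sing_mem_B hc
    rcases mem_insert.1 he with rfl | he
    · exact sing_mem_B hd
    · exact hP.1 (mem_of_mem_erase he)
  have hcard := hmax _ hQ
  have hd1 : d ∉ P.erase b := fun h => hdP (mem_of_mem_erase h)
  have hc1 : c ∉ insert d (P.erase b) := by
    intro h
    rcases mem_insert.1 h with rfl | h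
    · exact hcd rfl
    · exact hcP (mem_of_mem_erase h)
  rw [card_insert_of_notMem hc1, card_insert_of_notMem hd1,
    card_erase_of_mem hb] at hcard
  have hPpos : 0 < P.card := card_pos.2 ⟨b, hb⟩
  omega

/-- if some other point of the block has a singleton block, then `x` has at most 3 -/
lemma sing_card_le_three {b x y} (hb : b ∈ P) (hx : x ∈ b) (hy : y ∈ b) (hxy : x ≠ y)
    (hne : (Sing B P y).Nonempty) : (Sing B P x).card ≤ 3 := by
  obtain ⟨d, hd⟩ := hne
  have hd3 : (d \ SS P).card = 3 := sing_tail_card hB hd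
  have hkey : ∀ c ∈ Sing B P x, (c ∩ (d \ SS P)).Nonempty := by
    intro c hc
    have hmeet := sing_meet hB hP hmax hb hx hy hxy hc hd
    obtain ⟨p, hp⟩ := not_disjoint_iff_nonempty_inter.1 hmeet
    rcases mem_inter.1 hp with ⟨hp1, hp2⟩
    refine ⟨p, mem_inter.2 ⟨hp1, mem_sdiff.2 ⟨hp2, fun hpS => ?_⟩⟩⟩
    have h1 : p ∈ c ∩ SS P := mem_inter.2 ⟨hp1, hpS⟩
    rw [sing_inter hc, mem_singleton] at h1
    subst h1
    have h2 : p ∈ d ∩ SS P := mem_inter.2 ⟨hp2, hpS⟩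
    rw [sing_inter hd, mem_singleton] at h2
    exact hxy h2
  rw [← hd3]
  apply Finset.card_le_card_of_injOn
    (fun c => if h : (c ∩ (d \ SS P)).Nonempty then h.choose else x)
  · intro c hc
    simp only [dif_pos (hkey c hc)]
    exact (mem_inter.1 (hkey c hc).choose_spec).2
  · intro c hc c' hc' heq
    rw [mem_coe] at hc hc'
    by_contra hnecc
    simp only [dif_pos (hkey c hc), dif_pos (hkey c' hc')] at heq
    have hpc : (hkey c hc).choose ∈ c ∩ (d \ SS P) := (hkey c hc).choose_spec
    have hpc' : (hkey c hc).choose ∈ c' ∩ (d \ SS P) := heq ▸ (hkey c' hc').choose_spec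
    have hcc : c ∩ c' = {x} := sing_inter_eq hB hc hc' hnecc
    have hpx : (hkey c hc).choose ∈ c ∩ c' :=
      mem_inter.2 ⟨(mem_inter.1 hpc).1, (mem_inter.1 hpc').1⟩
    rw [hcc, mem_singleton] at hpx
    have := (mem_sdiff.1 (mem_inter.1 hpc).2).2
    rw [hpx] at this
    exact this (sing_x_mem_SS hc)

/-- total number of singleton blocks attached to a non-heavy block is at most 12 -/
lemma sum_sing_le {b} (hb : b ∈ P) (hnh : ∀ x ∈ b, (Sing B P x).card ≤ 12) :
    ∑ x ∈ b, (Sing B P x).card ≤ 12 := by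
  by_cases htwo : ∃ x ∈ b, ∃ y ∈ b, x ≠ y ∧ (Sing B P x).Nonempty ∧ (Sing B P y).Nonempty
  · obtain ⟨x₁, hx₁, x₂, hx₂, hne12, hn1, hn2⟩ := htwo
    have h3 : ∀ x ∈ b, (Sing B P x).card ≤ 3 := by
      intro x hx
      rcases eq_or_ne x x₁ with rfl | hne
      · exact sing_card_le_three hB hP hmax hb hx hx₂ hne12 hn2
      · exact sing_card_le_three hB hP hmax hb hx hx₁ hne hn1
    calc ∑ x ∈ b, (Sing B P x).card ≤ ∑ _x ∈ b, 3 := Finset.sum_le_sum h3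
      _ = b.card * 3 := by rw [Finset.sum_const, smul_eq_mul]
      _ ≤ 12 := by rw [card4 hB (hP.1 hb)]
  · by_cases hall : ∀ x ∈ b, Sing B P x = ∅
    · have : ∑ x ∈ b, (Sing B P x).card = 0 :=
        Finset.sum_eq_zero (fun x hx => by rw [hall x hx, card_empty])
      omega
    · push_neg at hall
      obtain ⟨x₀, hx₀, hx₀ne⟩ := hall
      have hzero : ∀ x ∈ b, x ≠ x₀ → (Sing B P x).card = 0 := by
        intro x hx hne
        rw [Finset.card_eq_zero]
        by_contra hxne
        exact htwo ⟨x, hx, x₀, hx₀, hne, nonempty_iff_ne_empty.2 hxne,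
          hx₀ne⟩
      rw [Finset.sum_eq_single_of_mem x₀ hx₀ (fun y hy hne => hzero y hy hne)]
      exact hnh x₀ hx₀

/-- greedily choose pairwise disjoint singleton blocks at heavy points of the
blocks of `T`, avoiding a small forbidden set `F` -/
lemma greedy : ∀ (T : Finset (Finset (Fin v))), T ⊆ P →
    (∀ b ∈ T, ∃ x ∈ b, 13 ≤ (Sing B P x).card) →
    ∀ F : Finset (Fin v), F.card + 3 * T.card ≤ 12 →
    ∃ Q : Finset (Finset (Fin v)), Q ⊆ B ∧ Q.card = T.card ∧
      (∀ q ∈ Q, ∃ b ∈ T, ∃ x, x ∈ b ∧ q ∩ SS P = {x} ∧ 13 ≤ (Sing B P x).card) ∧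
      (∀ q ∈ Q, Disjoint (q \ SS P) F) ∧
      (∀ q ∈ Q, ∀ q' ∈ Q, q ≠ q' → Disjoint q q') := by
  intro T
  induction T using Finset.induction_on with
  | empty =>
    intro _ _ F _
    exact ⟨∅, by simp⟩
  | @insert b T' hbT' ih =>
    intro hTP hheavy F hF
    have hcard' : F.card + 3 * T'.card ≤ 12 := by
      rw [card_insert_of_notMem hbT'] at hF; omega
    obtain ⟨Q', hQ'B, hQ'card, hQ'prop, hQ'F, hQ'disj⟩ :=
      ih (fun e he => hTP (mem_insert_of_mem he))
        (fun e he => hheavy e (mem_insert_of_mem he)) F hcard'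
    obtain ⟨x, hxb, hxheavy⟩ := hheavy b (mem_insert_self b T')
    have hbP : b ∈ P := hTP (mem_insert_self b T')
    -- forbidden set for the new choice
    set F' := F ∪ Q'.biUnion (fun q => q \ SS P) with hF'def
    have htails : (Q'.biUnion (fun q => q \ SS P)).card ≤ 3 * Q'.card := by
      calc (Q'.biUnion (fun q => q \ SS P)).card ≤ ∑ q ∈ Q', (q \ SS P).card :=
            card_biUnion_le
        _ ≤ ∑ _q ∈ Q', 3 := Finset.sum_le_sum (fun q hq => by
            obtain ⟨b', _, x', _, hq', _⟩ := hQ'prop q hq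
            have : q ∈ Sing B P x' := mem_filter.2 ⟨hQ'B hq, hq'⟩
            exact le_of_eq (sing_tail_card hB this))
        _ = 3 * Q'.card := by rw [Finset.sum_const, smul_eq_mul, mul_comm]
    have hF'card : F'.card ≤ 9 := by
      calc F'.card ≤ F.card + (Q'.biUnion (fun q => q \ SS P)).card := card_union_le _ _
        _ ≤ F.card + 3 * T'.card := by omega
        _ ≤ 9 := by rw [card_insert_of_notMem hbT'] at hF; omega
    -- find a good singleton block at x
    have hbad := sing_bad_card (P := P) hB x F'
    have hgood : ((Sing B P x).filter (fun q => Disjoint (q \ SS P) F')).Nonempty := by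
      rw [← card_pos]
      have := Finset.card_filter_add_card_filter_not
        (s := Sing B P x) (p := fun q => Disjoint (q \ SS P) F')
      omega
    obtain ⟨q, hq⟩ := hgood
    rw [mem_filter] at hq
    obtain ⟨hqSing, hqF'⟩ := hq
    have hqB : q ∈ B := sing_mem_B hqSing
    have hqinter : q ∩ SS P = {x} := sing_inter hqSing
    -- q is new
    have hqQ' : q ∉ Q' := by
      intro hmem
      obtain ⟨b', hb'T', x', hx'b', hq', _⟩ := hQ'prop q hmem
      have : x = x' := by
        rw [hqinter] at hq'; exact singleton_injective hq'
      subst this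
      have hb'P : b' ∈ P := hTP (mem_insert_of_mem hb'T')
      have hbb' : b ≠ b' := fun h => hbT' (h ▸ hb'T')
      exact (disjoint_left.1 (Pdisj hP hbP hb'P hbb')) hxb hx'b'
    refine ⟨insert q Q', ?_, ?_, ?_, ?_, ?_⟩
    · intro e he
      rcases mem_insert.1 he with rfl | he
      · exact hqB
      · exact hQ'B he
    · rw [card_insert_of_notMem hqQ', card_insert_of_notMem hbT', hQ'card]
    · intro e he
      rcases mem_insert.1 he with rfl | he
      · exact ⟨b, mem_insert_self b T', x, hxb, hqinter, hxheavy⟩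
      · obtain ⟨b', hb', rest⟩ := hQ'prop e he
        exact ⟨b', mem_insert_of_mem hb', rest⟩
    · intro e he
      rcases mem_insert.1 he with rfl | he
      · exact disjoint_of_subset_right subset_union_left hqF'
      · exact hQ'F e he
    · refine ppc_step (fun e he _ => ?_) hQ'disj
      -- q is disjoint from each old q'
      obtain ⟨b', hb'T', x', hx'b', he', _⟩ := hQ'prop e he
      refine disjoint_left.2 fun a ha ha' => ?_
      by_cases haS : a ∈ SS P
      · have h1 : a ∈ q ∩ SS P := mem_inter.2 ⟨ha, haS⟩
        rw [hqinter, mem_singleton] at h1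
        subst h1
        have h2 : a ∈ e ∩ SS P := mem_inter.2 ⟨ha', haS⟩
        rw [he', mem_singleton] at h2
        have hb'P : b' ∈ P := hTP (mem_insert_of_mem hb'T')
        have hbb' : b ≠ b' := fun h => hbT' (h ▸ hb'T')
        exact (disjoint_left.1 (Pdisj hP hbP hb'P hbb')) hxb (h2 ▸ hx'b')
      · have h1 : a ∈ q \ SS P := mem_sdiff.2 ⟨ha, haS⟩
        have h2 : a ∈ F' := mem_union_right _ (mem_biUnion.2 ⟨e, he, mem_sdiff.2 ⟨ha', haS⟩⟩)
        exact (disjoint_left.1 hqF') h1 h2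

/-- a block avoiding all heavy points and meeting only heavy blocks of `P`
leads to a contradiction with maximality -/
lemma no_bad_multi {c} (hc : c ∈ B) (hcP : c ∉ P)
    (havoid : ∀ x : Fin v, 13 ≤ (Sing B P x).card → x ∉ c)
    (hheavy : ∀ b ∈ P, ¬ Disjoint c b → ∃ x ∈ b, 13 ≤ (Sing B P x).card) : False := by
  classical
  set T := P.filter (fun b => ¬ Disjoint c b) with hTdef
  have hTP : T ⊆ P := filter_subset _ _
  obtain ⟨p₀, hp₀⟩ : c.Nonempty := card_pos.1 (by rw [card4 hB hc]; norm_num)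
  -- T.card ≤ (c ∩ SS P).card
  have hTcard : T.card ≤ (c ∩ SS P).card := by
    apply Finset.card_le_card_of_injOn
      (fun b => if h : (c ∩ b).Nonempty then h.choose else p₀)
    · intro b hb
      have hne : (c ∩ b).Nonempty := not_disjoint_iff_nonempty_inter.1 (mem_filter.1 hb).2
      simp only [dif_pos hne]
      rcases mem_inter.1 hne.choose_spec with ⟨h1, h2⟩
      exact mem_inter.2 ⟨h1, subset_SS (mem_filter.1 hb).1 h2⟩
    · intro b hb b' hb' heq
      rw [mem_coe] at hb hb'
      by_contra hne
      have h1 : (c ∩ b).Nonempty := not_disjoint_iff_nonempty_inter.1 (mem_filter.1 hb).2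
      have h2 : (c ∩ b').Nonempty := not_disjoint_iff_nonempty_inter.1 (mem_filter.1 hb').2
      simp only [dif_pos h1, dif_pos h2] at heq
      have hp1 : h1.choose ∈ b := (mem_inter.1 h1.choose_spec).2
      have hp2 : h1.choose ∈ b' := heq ▸ (mem_inter.1 h2.choose_spec).2
      exact (disjoint_left.1 (Pdisj hP (mem_filter.1 hb).1 (mem_filter.1 hb').1 hne)) hp1 hp2
  have hcS : (c ∩ SS P).card ≤ 4 := by
    calc (c ∩ SS P).card ≤ c.card := card_le_card inter_subset_left
      _ = 4 := card4 hB hc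
  have hcsplit : (c ∩ SS P).card + (c \ SS P).card = 4 := by
    rw [card_inter_add_card_sdiff, card4 hB hc]
  have hFcond : (c \ SS P).card + 3 * T.card ≤ 12 := by omega
  obtain ⟨Q, hQB, hQcard, hQprop, hQF, hQdisj⟩ :=
    greedy hB hP hmax T hTP (fun b hb => hheavy b (mem_filter.1 hb).1 (mem_filter.1 hb).2)
      (c \ SS P) hFcond
  -- now build the bigger PPC
  have hqnotP : ∀ q ∈ Q, q ∉ P := by
    intro q hq hqP
    obtain ⟨b', _, x', _, hq', _⟩ := hQprop q hq
    exact sing_not_mem_P hB hP (mem_filter.2 ⟨hQB hq, hq'⟩) hqP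
  have hdisjQP : ∀ q ∈ Q, ∀ e ∈ P \ T, Disjoint q e := by
    intro q hq e he
    obtain ⟨b', hb'T, x', hx'b', hq', _⟩ := hQprop q hq
    rcases mem_sdiff.1 he with ⟨heP, heT⟩
    have hne : e ≠ b' := by
      intro h; subst h; exact heT hb'T
    exact sing_disj_other hP (hTP hb'T) heP hne hq' hx'b'
  have hdisjcP : ∀ e ∈ P \ T, Disjoint c e := by
    intro e he
    rcases mem_sdiff.1 he with ⟨heP, heT⟩
    by_contra hnd
    exact heT (mem_filter.2 ⟨heP, hnd⟩)
  have hdisjcQ : ∀ q ∈ Q, Disjoint c q := by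
    intro q hq
    obtain ⟨b', hb'T, x', hx'b', hq', hx'heavy⟩ := hQprop q hq
    refine disjoint_left.2 fun a ha ha' => ?_
    by_cases haS : a ∈ SS P
    · have h1 : a ∈ q ∩ SS P := mem_inter.2 ⟨ha', haS⟩
      rw [hq', mem_singleton] at h1
      subst h1
      exact havoid a hx'heavy ha
    · exact (disjoint_left.1 (hQF q hq)) (mem_sdiff.2 ⟨ha', haS⟩)
        (mem_sdiff.2 ⟨ha, haS⟩)
  -- the union (P \ T) ∪ Q is pairwise disjoint
  have hU : ∀ e₁ ∈ (P \ T) ∪ Q, ∀ e₂ ∈ (P \ T) ∪ Q, e₁ ≠ e₂ → Disjoint e₁ e₂ := by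
    intro e₁ h₁ e₂ h₂ hne
    rcases mem_union.1 h₁ with h₁ | h₁ <;> rcases mem_union.1 h₂ with h₂ | h₂
    · exact Pdisj hP (mem_sdiff.1 h₁).1 (mem_sdiff.1 h₂).1 hne
    · exact (hdisjQP e₂ h₂ e₁ h₁).symm
    · exact hdisjQP e₁ h₁ e₂ h₂
    · exact hQdisj e₁ h₁ e₂ h₂ hne
  have hstep : ∀ e₁ ∈ insert c ((P \ T) ∪ Q), ∀ e₂ ∈ insert c ((P \ T) ∪ Q),
      e₁ ≠ e₂ → Disjoint e₁ e₂ := by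
    refine ppc_step (fun e he _ => ?_) hU
    rcases mem_union.1 he with he | he
    · exact hdisjcP e he
    · exact hdisjcQ e he
  have hQPPC : IsPPC B (insert c ((P \ T) ∪ Q)) := by
    refine ⟨fun e he => ?_, hstep⟩
    rcases mem_insert.1 he with rfl | he
    · exact hc
    rcases mem_union.1 he with he | he
    · exact hP.1 (mem_sdiff.1 he).1
    · exact hQB he
  have hcnotin : c ∉ (P \ T) ∪ Q := by
    intro h
    rcases mem_union.1 h with h | h
    · exact hcP (mem_sdiff.1 h).1
    · obtain ⟨b', _, x', _, hq', hx'heavy⟩ := hQprop c h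
      have : x' ∈ c := by
        have : x' ∈ c ∩ SS P := hq' ▸ mem_singleton_self x'
        exact (mem_inter.1 this).1
      exact havoid x' hx'heavy this
  have hdisjPTQ : Disjoint (P \ T) Q := by
    refine disjoint_left.2 fun q hq hq' => ?_
    exact hqnotP q hq' (mem_sdiff.1 hq).1
  have hcard := hmax _ hQPPC
  rw [card_insert_of_notMem hcnotin, card_union_of_disjoint hdisjPTQ,
    card_sdiff_of_subset hTP, hQcard] at hcard
  have hTle : T.card ≤ P.card := card_le_card hTP
  omega

end Max

/-- blocks meeting a set `R` number at most `|R|·v/3 − |R|(|R|+1)/6` -/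
lemma through_bound (hB : IsPacking v 4 B) (R : Finset (Fin v)) :
    ((B.filter (fun c => ¬ Disjoint c R)).card : ℚ) ≤
      R.card * v / 3 - R.card * (R.card + 1) / 6 := by
  classical
  induction R using Finset.induction_on with
  | empty => simp
  | @insert x R' hxR' ih =>
    have hsub : B.filter (fun c => ¬ Disjoint c (insert x R')) ⊆
        B.filter (fun c => ¬ Disjoint c R') ∪ B.filter (fun c => x ∈ c ∧ Disjoint c R') := by
      intro c hcmem
      rcases mem_filter.1 hcmem with ⟨hcB, hcnd⟩
      by_cases hR' : Disjoint c R'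
      · obtain ⟨p, hp⟩ := not_disjoint_iff_nonempty_inter.1 hcnd
        rcases mem_inter.1 hp with ⟨hp1, hp2⟩
        rcases mem_insert.1 hp2 with rfl | hp2
        · exact mem_union_right _ (mem_filter.2 ⟨hcB, hp1, hR'⟩)
        · exact absurd ((disjoint_left.1 hR') hp1) (fun h => h hp2)
      · exact mem_union_left _ (mem_filter.2 ⟨hcB, hR'⟩)
    set A := B.filter (fun c => x ∈ c ∧ Disjoint c R') with hAdef
    -- bound |A|
    have hAbound : 3 * A.card + (R'.card + 1) ≤ v := by
      have hdisjt : ∀ c ∈ A, ∀ c' ∈ A, c ≠ c' → Disjoint (c.erase x) (c'.erase x) := by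
        intro c hcm c' hcm' hne
        have hxc : x ∈ c := (mem_filter.1 hcm).2.1
        have hxc' : x ∈ c' := (mem_filter.1 hcm').2.1
        have hle := pair_le hB (mem_filter.1 hcm).1 (mem_filter.1 hcm').1 hne
        refine disjoint_left.2 fun a ha ha' => ?_
        rcases mem_erase.1 ha with ⟨hax, hac⟩
        rcases mem_erase.1 ha' with ⟨_, hac'⟩
        have h2 : ({a, x} : Finset (Fin v)) ⊆ c ∩ c' := by
          intro z hz; rcases mem_insert.1 hz with rfl | hz
          · exact mem_inter.2 ⟨hac, hac'⟩
          · exact (mem_singleton.1 hz) ▸ mem_inter.2 ⟨hxc, hxc'⟩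
        have := card_le_card h2
        rw [card_pair hax] at this
        omega
      have hbu : (A.biUnion (fun c => c.erase x)).card = ∑ c ∈ A, (c.erase x).card :=
        card_biUnion hdisjt
      have herasecard : ∀ c ∈ A, (c.erase x).card = 3 := by
        intro c hcm
        rw [card_erase_of_mem (mem_filter.1 hcm).2.1, card4 hB (mem_filter.1 hcm).1]
      have hsum : ∑ c ∈ A, (c.erase x).card = 3 * A.card := by
        rw [Finset.sum_congr rfl herasecard, Finset.sum_const, smul_eq_mul, mul_comm]
      have hsubu : A.biUnion (fun c => c.erase x) ⊆ univ \ insert x R' := by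
        intro a ha
        obtain ⟨c, hcm, hac⟩ := mem_biUnion.1 ha
        rcases mem_erase.1 hac with ⟨hax, hac⟩
        refine mem_sdiff.2 ⟨mem_univ _, fun hmem => ?_⟩
        rcases mem_insert.1 hmem with rfl | hmem
        · exact hax rfl
        · exact (disjoint_left.1 (mem_filter.1 hcm).2.2) hac hmem
      have hcard2 := card_le_card hsubu
      rw [card_sdiff_of_subset (subset_univ _), card_univ, Fintype.card_fin,
        card_insert_of_notMem hxR'] at hcard2
      have hle2 : (insert x R').card ≤ v := by
        have := card_le_card (subset_univ (insert x R'))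
        rwa [card_univ, Fintype.card_fin] at this
      rw [card_insert_of_notMem hxR'] at hle2
      rw [hbu, hsum] at hcard2
      omega
    have hstep : (B.filter (fun c => ¬ Disjoint c (insert x R'))).card ≤
        (B.filter (fun c => ¬ Disjoint c R')).card + A.card := by
      calc _ ≤ ((B.filter (fun c => ¬ Disjoint c R') ∪ A)).card := card_le_card hsub
        _ ≤ _ := card_union_le _ _
    have hAq : (A.card : ℚ) ≤ ((v : ℚ) - R'.card - 1) / 3 := by
      have : (3 * A.card + (R'.card + 1) : ℚ) ≤ v := by exact_mod_cast hAbound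
      linarith
    have hstepq : ((B.filter (fun c => ¬ Disjoint c (insert x R'))).card : ℚ) ≤
        ((B.filter (fun c => ¬ Disjoint c R')).card : ℚ) + A.card := by exact_mod_cast hstep
    rw [card_insert_of_notMem hxR']
    push_cast
    nlinarith [ih]

end Pf14


set_option maxHeartbeats 2000000 in
open Finset Pf14 in
theorem stmt14 (ρ v : ℕ) (hρ : 1 ≤ ρ)
    (hv : (27 * (ρ : ℚ) ^ 2 - 3 * ρ + 60) / 2 ≤ (v : ℚ)) :
    ∀ B : Finset (Finset (Fin v)), IsPacking v 4 B → MaxPPCSize B ρ →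
      (B.card : ℚ) ≤ (ρ : ℚ) * v / 3 - (ρ : ℚ) * (ρ + 1) / 6 := by
  intro B hB hM
  classical
  obtain ⟨P, hP, hPcard⟩ := hM.1
  have hmax : ∀ Q, IsPPC B Q → Q.card ≤ P.card := fun Q hQ => hPcard ▸ hM.2 Q hQ
  subst hPcard
  set ρ := P.card with hρdef
  -- v is positive
  have hρQ : (1 : ℚ) ≤ (ρ : ℚ) := by exact_mod_cast hρ
  have hv0 : 0 < v := by
    rcases Nat.eq_zero_or_pos v with hveq | hpos
    · exfalso
      rw [hveq] at hv
      push_cast at hv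
      nlinarith
    · exact hpos
  have x₀ : Fin v := ⟨0, hv0⟩
  -- heavy blocks and points
  set Hvy := P.filter (fun b => ∃ x ∈ b, 13 ≤ (Sing B P x).card) with hHdef
  set Pnh := P.filter (fun b => ¬ ∃ x ∈ b, 13 ≤ (Sing B P x).card) with hPnhdef
  set h := Hvy.card with hhdef
  set m := Pnh.card with hmdef
  have hhm : h + m = ρ := card_filter_add_card_filter_not _
  set R := (SS P).filter (fun x => 13 ≤ (Sing B P x).card) with hRdef
  set Snh := Pnh.biUnion id with hSnhdef
  have hPnhP : Pnh ⊆ P := filter_subset _ _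
  have hHvyP : Hvy ⊆ P := filter_subset _ _
  -- uniqueness of heavy points within a block
  have huniq : ∀ b ∈ P, ∀ x ∈ b, ∀ x' ∈ b, 13 ≤ (Sing B P x).card →
      13 ≤ (Sing B P x').card → x = x' := by
    intro b hb x hx x' hx' h1 h2
    by_contra hne
    have hne' : (Sing B P x').Nonempty := card_pos.1 (by omega)
    have := sing_card_le_three hB hP hmax hb hx hx' hne hne'
    omega
  -- R.card = h
  have hReq : R = Hvy.biUnion (fun b => b.filter (fun x => 13 ≤ (Sing B P x).card)) := by
    ext x
    simp only [hRdef, mem_filter, mem_biUnion]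
    constructor
    · rintro ⟨hxS, hxh⟩
      obtain ⟨b, hbP, hxb⟩ := mem_SS hxS
      exact ⟨b, mem_filter.2 ⟨hbP, x, hxb, hxh⟩, hxb, hxh⟩
    · rintro ⟨b, hbH, hxb, hxh⟩
      exact ⟨subset_SS (hHvyP hbH) hxb, hxh⟩
  have hRcard : R.card = h := by
    rw [hReq, card_biUnion]
    · have : ∀ b ∈ Hvy, (b.filter (fun x => 13 ≤ (Sing B P x).card)).card = 1 := by
        intro b hbH
        obtain ⟨hbP, x₁, hx₁, hx₁h⟩ := mem_filter.1 hbH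
        rw [card_eq_one]
        refine ⟨x₁, ?_⟩
        ext y
        simp only [mem_filter, mem_singleton]
        constructor
        · rintro ⟨hyb, hyh⟩
          exact huniq b hbP y hyb x₁ hx₁ hyh hx₁h
        · rintro rfl
          exact ⟨hx₁, hx₁h⟩
      rw [Finset.sum_congr rfl this, Finset.sum_const, smul_eq_mul, mul_one]
    · intro b hb b' hb' hne
      apply disjoint_of_subset_left (filter_subset _ _)
      apply disjoint_of_subset_right (filter_subset _ _)
      exact Pdisj hP (hHvyP hb) (hHvyP hb') hne
  -- Snh facts
  have hSnhcard : Snh.card = 4 * m := by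
    have heq : Snh.card = ∑ b ∈ Pnh, (id b).card :=
      card_biUnion (fun b hb b' hb' hne => Pdisj hP (hPnhP hb) (hPnhP hb') hne)
    have h4 : ∀ b ∈ Pnh, (id b).card = 4 := fun b hb => card4 hB (hP.1 (hPnhP hb))
    rw [heq, Finset.sum_congr rfl h4, Finset.sum_const, smul_eq_mul, mul_comm]
  have hSnhS : Snh ⊆ SS P := by
    intro x hx
    obtain ⟨b, hb, hxb⟩ := mem_biUnion.1 hx
    exact subset_SS (hPnhP hb) hxb
  have hRS : R ⊆ SS P := filter_subset _ _
  have hRSnh : Disjoint R Snh := by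
    refine disjoint_left.2 fun x hxR hxSnh => ?_
    obtain ⟨b, hb, hxb⟩ := mem_biUnion.1 hxSnh
    exact (mem_filter.1 hb).2 ⟨x, hxb, (mem_filter.1 hxR).2⟩
  have hSnhSR : Snh ⊆ (SS P) \ R := fun x hx =>
    mem_sdiff.2 ⟨hSnhS hx, fun hxR => (disjoint_left.1 hRSnh) hxR hx⟩
  have hSScard : (SS P).card = 4 * ρ := card_SS hB hP
  have hSRcard : ((SS P \ R) \ Snh).card = 3 * h := by
    rw [card_sdiff_of_subset hSnhSR, card_sdiff_of_subset hRS, hSScard, hRcard, hSnhcard]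
    omega
  -- split B according to meeting R
  have hsplitc : (B.filter (fun c => Disjoint c R)).card
      + (B.filter (fun c => ¬ Disjoint c R)).card = B.card :=
    card_filter_add_card_filter_not _
  set B₀ := B.filter (fun c => Disjoint c R) with hB₀def
  set M := B₀.filter (fun c => c ∉ P ∧ 2 ≤ (c ∩ SS P).card) with hMdef
  set X := Pnh.biUnion (fun b => b.biUnion (fun y => Sing B P y)) with hXdef
  -- cover B₀
  have hcover : B₀ ⊆ (Pnh ∪ X) ∪ M := by
    intro c hc
    rcases mem_filter.1 hc with ⟨hcB, hcR⟩
    by_cases hcP : c ∈ P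
    · refine mem_union_left _ (mem_union_left _ (mem_filter.2 ⟨hcP, ?_⟩))
      rintro ⟨x, hxc, hxh⟩
      exact (disjoint_left.1 hcR) hxc (mem_filter.2 ⟨subset_SS hcP hxc, hxh⟩)
    · have hne := meet_SS hB hP hmax hcB
      by_cases h2 : 2 ≤ (c ∩ SS P).card
      · exact mem_union_right _ (mem_filter.2 ⟨hc, hcP, h2⟩)
      · have h1 : (c ∩ SS P).card = 1 := by
          have := card_pos.2 hne; omega
        obtain ⟨y, hy⟩ := card_eq_one.1 h1
        have hcSing : c ∈ Sing B P y := mem_filter.2 ⟨hcB, hy⟩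
        have hyS : y ∈ SS P := sing_x_mem_SS hcSing
        obtain ⟨by', hby'P, hyby'⟩ := mem_SS hyS
        have hby'nh : by' ∈ Pnh := by
          refine mem_filter.2 ⟨hby'P, ?_⟩
          rintro ⟨x, hxb, hxh⟩
          rcases eq_or_ne x y with heq | hxy
          · rw [heq] at hxh
            have hyc : y ∈ c := sing_mem_x hcSing
            exact (disjoint_left.1 hcR) hyc (mem_filter.2 ⟨hyS, hxh⟩)
          · have := sing_card_le_three hB hP hmax hby'P hxb hyby' hxy ⟨c, hcSing⟩
            omega
        refine mem_union_left _ (mem_union_right _ ?_)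
        exact mem_biUnion.2 ⟨by', hby'nh, mem_biUnion.2 ⟨y, hyby', hcSing⟩⟩
  have hXcard : X.card ≤ 12 * m := by
    calc X.card ≤ ∑ b ∈ Pnh, (b.biUnion (fun y => Sing B P y)).card := card_biUnion_le
      _ ≤ ∑ b ∈ Pnh, 12 := by
          refine Finset.sum_le_sum (fun b hb => ?_)
          calc (b.biUnion (fun y => Sing B P y)).card
              ≤ ∑ y ∈ b, (Sing B P y).card := card_biUnion_le
            _ ≤ 12 := by
                refine sum_sing_le hB hP hmax (hPnhP hb) (fun x hx => ?_)
                by_contra hgt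
                exact (mem_filter.1 hb).2 ⟨x, hx, by omega⟩
      _ = 12 * m := by rw [Finset.sum_const, smul_eq_mul, mul_comm]
  have hcover_card : B₀.card ≤ m + 12 * m + M.card := by
    calc B₀.card ≤ ((Pnh ∪ X) ∪ M).card := card_le_card hcover
      _ ≤ (Pnh ∪ X).card + M.card := card_union_le _ _
      _ ≤ (Pnh.card + X.card) + M.card := by
          have := card_union_le Pnh X; omega
      _ ≤ m + 12 * m + M.card := by omega
  -- every multi block meets a non-heavy block
  have hMnh : ∀ c ∈ M, (c ∩ Snh).Nonempty := by
    intro c hc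
    rcases mem_filter.1 hc with ⟨hcB₀, hcP, hc2⟩
    rcases mem_filter.1 hcB₀ with ⟨hcB, hcR⟩
    by_contra hempty
    refine no_bad_multi hB hP hmax hcB hcP (fun x h13 hxc => ?_) (fun b hb hnd => ?_)
    · obtain ⟨c', hc'⟩ : (Sing B P x).Nonempty := card_pos.1 (by omega)
      exact (disjoint_left.1 hcR) hxc (mem_filter.2 ⟨sing_x_mem_SS hc', h13⟩)
    · by_contra hnh
      obtain ⟨p, hp⟩ := not_disjoint_iff_nonempty_inter.1 hnd
      rcases mem_inter.1 hp with ⟨hpc, hpb⟩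
      exact hempty ⟨p, mem_inter.2 ⟨hpc,
        mem_biUnion.2 ⟨b, mem_filter.2 ⟨hb, hnh⟩, hpb⟩⟩⟩
  -- the injection from M into pairs
  set yf : Finset (Fin v) → Fin v :=
    fun c => if hne : (c ∩ Snh).Nonempty then (c ∩ Snh).min' hne else x₀ with hyfdef
  set Zf : Finset (Fin v) → Finset (Fin v) :=
    fun c => (c ∩ SS P).filter (fun z => ∀ b ∈ P, yf c ∈ b → z ∉ b) with hZfdef
  set zf : Finset (Fin v) → Fin v :=
    fun c => if hne : (Zf c).Nonempty then (Zf c).min' hne else x₀ with hzfdef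
  have hyf : ∀ c ∈ M, yf c ∈ c ∩ Snh ∧ ∀ w ∈ c ∩ Snh, yf c ≤ w := by
    intro c hc
    rw [hyfdef]
    simp only [dif_pos (hMnh c hc)]
    exact ⟨min'_mem _ _, fun w hw => min'_le _ _ hw⟩
  have hZne : ∀ c ∈ M, (Zf c).Nonempty := by
    intro c hc
    rcases mem_filter.1 hc with ⟨hcB₀, hcP, hc2⟩
    have hcB : c ∈ B := (mem_filter.1 hcB₀).1
    have hyc : yf c ∈ c ∩ SS P := by
      rcases mem_inter.1 (hyf c hc).1 with ⟨h1, h2⟩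
      exact mem_inter.2 ⟨h1, hSnhS h2⟩
    obtain ⟨z', hz'mem, hz'ne⟩ :=
      Finset.exists_mem_ne (s := c ∩ SS P) (by omega) (yf c)
    refine ⟨z', mem_filter.2 ⟨hz'mem, fun b hbP hyb hz'b => ?_⟩⟩
    have hcb : c ≠ b := fun h => hcP (h ▸ hbP)
    have hsub : ({z', yf c} : Finset (Fin v)) ⊆ c ∩ b := by
      intro w hw
      rcases mem_insert.1 hw with rfl | hw
      · exact mem_inter.2 ⟨(mem_inter.1 hz'mem).1, hz'b⟩
      · rw [mem_singleton.1 hw]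
        exact mem_inter.2 ⟨(mem_inter.1 hyc).1, hyb⟩
    have := card_le_card hsub
    rw [card_pair hz'ne] at this
    have := pair_le hB hcB (hP.1 hbP) hcb
    omega
  have hzf : ∀ c ∈ M, zf c ∈ Zf c := by
    intro c hc
    rw [hzfdef]
    simp only [dif_pos (hZne c hc)]
    exact min'_mem _ _
  set T₁ := Snh ×ˢ ((SS P \ R) \ Snh) with hT₁def
  set T₂ := (Snh ×ˢ Snh).filter
    (fun p => (∀ b ∈ P, ¬(p.1 ∈ b ∧ p.2 ∈ b)) ∧ p.1 < p.2) with hT₂def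
  have hMT : M.card ≤ (T₁ ∪ T₂).card := by
    apply Finset.card_le_card_of_injOn (fun c => (yf c, zf c))
    · intro c hc
      have hy := hyf c hc
      have hz := hzf c hc
      rcases mem_filter.1 hz with ⟨hzc, hzprop⟩
      have hcR : Disjoint c R := (mem_filter.1 (mem_filter.1 hc).1).2
      have hzR : zf c ∉ R := (disjoint_left.1 hcR) (mem_inter.1 hzc).1
      have hySnh : yf c ∈ Snh := (mem_inter.1 hy.1).2
      by_cases hzSnh : zf c ∈ Snh
      · refine mem_union_right _ (mem_filter.2 ⟨mem_product.2 ⟨hySnh, hzSnh⟩, ?_, ?_⟩)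
        · exact fun b hb hmem => hzprop b hb hmem.1 hmem.2
        · have hle : yf c ≤ zf c :=
            hy.2 _ (mem_inter.2 ⟨(mem_inter.1 hzc).1, hzSnh⟩)
          refine lt_of_le_of_ne hle (fun heq => ?_)
          have heq' : yf c = zf c := heq
          obtain ⟨b₁, hb₁, hyb₁⟩ := mem_biUnion.1 hySnh
          exact hzprop b₁ (hPnhP hb₁) hyb₁ (heq' ▸ hyb₁)
      · refine mem_union_left _ (mem_product.2 ⟨hySnh, ?_⟩)
        exact mem_sdiff.2 ⟨mem_sdiff.2 ⟨(mem_inter.1 hzc).2, hzR⟩, hzSnh⟩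
    · intro c hc c' hc' heq
      rw [mem_coe] at hc hc'
      by_contra hne
      have hy := hyf c hc
      have hy' := hyf c' hc'
      have hz := hzf c hc
      have hz' := hzf c' hc'
      have heq1 : yf c = yf c' := congrArg Prod.fst heq
      have heq2 : zf c = zf c' := congrArg Prod.snd heq
      have hyc : yf c ∈ c := (mem_inter.1 hy.1).1
      have hyc' : yf c ∈ c' := heq1 ▸ (mem_inter.1 hy'.1).1
      have hzc : zf c ∈ c := (mem_inter.1 (mem_filter.1 hz).1).1
      have hzc' : zf c ∈ c' := by
        rw [heq2]
        exact (mem_inter.1 (mem_filter.1 hz').1).1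
      have hyz : yf c ≠ zf c := by
        intro hyzeq
        obtain ⟨b₁, hb₁, hyb₁⟩ := mem_biUnion.1 ((mem_inter.1 hy.1).2)
        exact (mem_filter.1 hz).2 b₁ (hPnhP hb₁) hyb₁ (hyzeq ▸ hyb₁)
      have hcB : c ∈ B := (mem_filter.1 (mem_filter.1 hc).1).1
      have hcB' : c' ∈ B := (mem_filter.1 (mem_filter.1 hc').1).1
      have hsub : ({yf c, zf c} : Finset (Fin v)) ⊆ c ∩ c' := by
        intro w hw
        rcases mem_insert.1 hw with rfl | hw
        · exact mem_inter.2 ⟨hyc, hyc'⟩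
        · rw [mem_singleton.1 hw]
          exact mem_inter.2 ⟨hzc, hzc'⟩
      have h2 := card_le_card hsub
      rw [card_pair hyz] at h2
      have := pair_le hB hcB hcB' hne
      omega
  have hT₁card : T₁.card = 12 * m * h := by
    rw [hT₁def, card_product, hSnhcard, hSRcard]; ring
  -- bound T₂ via the swap involution
  set D := (Snh ×ˢ Snh).filter (fun p => ∀ b ∈ P, ¬(p.1 ∈ b ∧ p.2 ∈ b)) with hDdef
  set E := Pnh.biUnion (fun b => b ×ˢ b) with hEdef
  have hT₂D : T₂ ⊆ D := fun p hp =>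
    mem_filter.2 ⟨(mem_filter.1 hp).1, (mem_filter.1 hp).2.1⟩
  have hT₂'D : T₂.image Prod.swap ⊆ D := by
    intro p hp
    obtain ⟨q, hq, rfl⟩ := mem_image.1 hp
    rcases mem_filter.1 hq with ⟨hqprod, hqcond, _⟩
    rcases mem_product.1 hqprod with ⟨h1, h2⟩
    exact mem_filter.2 ⟨mem_product.2 ⟨h2, h1⟩,
      fun b hb hmem => hqcond b hb ⟨hmem.2, hmem.1⟩⟩
  have hdisjT₂ : Disjoint T₂ (T₂.image Prod.swap) := by
    refine disjoint_left.2 fun p hp hp' => ?_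
    obtain ⟨q, hq, hqeq⟩ := mem_image.1 hp'
    have h1 : p.1 < p.2 := (mem_filter.1 hp).2.2
    have h2 : q.1 < q.2 := (mem_filter.1 hq).2.2
    have e1 : q.2 = p.1 := congrArg Prod.fst hqeq
    have e2 : q.1 = p.2 := congrArg Prod.snd hqeq
    rw [e1, e2] at h2
    exact absurd h1 (not_lt.2 (le_of_lt h2))
  have himg : (T₂.image Prod.swap).card = T₂.card :=
    card_image_of_injective _ Prod.swap_injective
  have hEsub : E ⊆ Snh ×ˢ Snh := by
    intro p hp
    obtain ⟨b, hb, hpb⟩ := mem_biUnion.1 hp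
    rcases mem_product.1 hpb with ⟨h1, h2⟩
    exact mem_product.2 ⟨mem_biUnion.2 ⟨b, hb, h1⟩, mem_biUnion.2 ⟨b, hb, h2⟩⟩
  have hDE : Disjoint D E := by
    refine disjoint_left.2 fun p hp hp' => ?_
    obtain ⟨b, hb, hpb⟩ := mem_biUnion.1 hp'
    rcases mem_product.1 hpb with ⟨h1, h2⟩
    exact (mem_filter.1 hp).2 b (hPnhP hb) ⟨h1, h2⟩
  have hEcard : E.card = 16 * m := by
    rw [hEdef, card_biUnion]
    · have h16 : ∀ b ∈ Pnh, (b ×ˢ b).card = 16 := by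
        intro b hb
        rw [card_product, card4 hB (hP.1 (hPnhP hb))]
      rw [Finset.sum_congr rfl h16, Finset.sum_const, smul_eq_mul, mul_comm]
    · intro b hb b' hb' hne
      refine disjoint_left.2 fun p hp hp' => ?_
      rcases mem_product.1 hp with ⟨h1, _⟩
      rcases mem_product.1 hp' with ⟨h1', _⟩
      exact (disjoint_left.1 (Pdisj hP (hPnhP hb) (hPnhP hb') hne)) h1 h1'
  have hDcard : D.card + E.card ≤ 16 * m * m := by
    have hsub2 : D ∪ E ⊆ Snh ×ˢ Snh := union_subset (filter_subset _ _) hEsub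
    have hle := card_le_card hsub2
    rw [card_union_of_disjoint hDE, card_product, hSnhcard] at hle
    nlinarith [hle]
  have hT₂card : 2 * T₂.card + 16 * m ≤ 16 * m * m := by
    have hUcard : T₂.card + T₂.card ≤ D.card := by
      have := card_le_card (union_subset hT₂D hT₂'D)
      rw [card_union_of_disjoint hdisjT₂, himg] at this
      omega
    linarith [hUcard, hDcard, hEcard]
  -- final arithmetic
  have e2 := through_bound hB R
  rw [hRcard] at e2
  have hTTcard : (T₁ ∪ T₂).card ≤ 12 * m * h + T₂.card := by
    have := card_union_le T₁ T₂
    linarith [hT₁card.le]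
  have hB₀q : (B₀.card : ℚ) ≤ 13 * m + 12 * m * h + T₂.card := by
    have hnat : B₀.card ≤ 13 * m + 12 * m * h + T₂.card := by
      linarith [hcover_card, hMT, hTTcard]
    exact_mod_cast hnat
  have hsplitq : (B.card : ℚ)
      = (B₀.card : ℚ) + ((B.filter (fun c => ¬ Disjoint c R)).card : ℚ) := by
    exact_mod_cast hsplitc.symm
  have ht₂q : 2 * ((T₂.card : ℚ)) + 16 * m ≤ 16 * m * m := by exact_mod_cast hT₂card
  have hhmq : (ρ : ℚ) = (h : ℚ) + (m : ℚ) := by exact_mod_cast hhm.symm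
  have hfac : (0:ℚ) ≤ ((ρ:ℚ) - 1) * ((ρ:ℚ) - 2) := by
    rcases le_or_gt ρ 1 with h1 | h1
    · have : ρ = 1 := le_antisymm h1 hρ
      rw [this]; norm_num
    · have h2 : 2 ≤ ρ := h1
      have : (2:ℚ) ≤ (ρ:ℚ) := by exact_mod_cast h2
      nlinarith
  have hv37 : (37:ℚ) * ρ + 3 ≤ (v:ℚ) := by nlinarith
  have key1 : (0:ℚ) ≤ (m:ℚ) * ((v:ℚ) - 37 * h - 37 * m - 3) := by
    apply mul_nonneg (Nat.cast_nonneg m)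
    have : (37:ℚ) * h + 37 * m = 37 * ρ := by rw [hhmq]; ring
    linarith
  have key2 : (0:ℚ) ≤ (m:ℚ) * ((m:ℚ) - 1) := by
    rcases Nat.eq_zero_or_pos m with hm0 | hm1
    · rw [hm0]; norm_num
    · have : (1:ℚ) ≤ (m:ℚ) := by exact_mod_cast hm1
      nlinarith
  rw [hsplitq, hhmq]
  nlinarith [hB₀q, e2, ht₂q, key1, key2]
end

section
/- β(1,v,4) = D(v,4) for 4 ≤ v ≤ 13; β(1,v,4) = 13 for 14 ≤ v ≤ 39; and β(1,v,4) = ⌊(v−1)/3⌋ for v ≥ 40. -/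
def deg {v : ℕ} (B : Finset (Finset (Fin v))) (x : Fin v) : ℕ :=
  (B.filter (fun b => x ∈ b)).card

lemma filter_univ_eq {v : ℕ} (b : Finset (Fin v)) :
    Finset.univ.filter (fun x => x ∈ b) = b := by ext x; simp

lemma sum_ite_card {v : ℕ} (b : Finset (Fin v)) :
    ∑ x : Fin v, (if x ∈ b then 1 else 0) = b.card := by
  rw [← Finset.card_filter, filter_univ_eq]

lemma sum_deg {v : ℕ} (B : Finset (Finset (Fin v))) (h : ∀ b ∈ B, b.card = 4) :
    ∑ x : Fin v, deg B x = 4 * B.card := by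
  have e : ∑ x : Fin v, deg B x = ∑ b ∈ B, b.card := by
    simp only [deg, Finset.card_filter]
    rw [Finset.sum_comm]
    exact Finset.sum_congr rfl (fun b _ => sum_ite_card b)
  rw [e, Finset.sum_congr rfl h, Finset.sum_const, smul_eq_mul, mul_comm]

lemma deg_le {v : ℕ} (B : Finset (Finset (Fin v))) (h : IsPacking v 4 B) (x : Fin v) :
    3 * deg B x + 1 ≤ v := by
  classical
  set S := B.filter (fun b => x ∈ b) with hS
  have hdisj : ∀ b₁ ∈ S, ∀ b₂ ∈ S, b₁ ≠ b₂ → Disjoint (b₁.erase x) (b₂.erase x) := by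
    intro b₁ h₁ b₂ h₂ hne
    simp only [hS, Finset.mem_filter] at h₁ h₂
    have hcard := h.2 b₁ h₁.1 b₂ h₂.1 hne
    rw [Finset.disjoint_left]
    intro a ha hab
    have hax : a ≠ x := (Finset.mem_erase.mp ha).1
    have h1 : a ∈ b₁ ∩ b₂ := Finset.mem_inter.mpr ⟨(Finset.mem_erase.mp ha).2, (Finset.mem_erase.mp hab).2⟩
    have h2 : x ∈ b₁ ∩ b₂ := Finset.mem_inter.mpr ⟨h₁.2, h₂.2⟩
    have := Finset.one_lt_card.mpr ⟨a, h1, x, h2, hax⟩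
    omega
  have hsub : S.biUnion (fun b => b.erase x) ⊆ Finset.univ.erase x := by
    intro a ha
    simp only [Finset.mem_biUnion] at ha
    obtain ⟨b, _, hab⟩ := ha
    exact Finset.mem_erase.mpr ⟨(Finset.mem_erase.mp hab).1, Finset.mem_univ a⟩
  have hcard : (S.biUnion (fun b => b.erase x)).card = ∑ b ∈ S, (b.erase x).card :=
    Finset.card_biUnion hdisj
  have hsum : ∑ b ∈ S, (b.erase x).card = 3 * S.card := by
    rw [Finset.sum_congr rfl (fun b hb => ?_), Finset.sum_const, smul_eq_mul, mul_comm]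
    simp only [hS, Finset.mem_filter] at hb
    rw [Finset.card_erase_of_mem hb.2, h.1 b hb.1]
  have hle := Finset.card_le_card hsub
  rw [hcard, hsum] at hle
  have h2 : (Finset.univ.erase x).card = v - 1 := by
    rw [Finset.card_erase_of_mem (Finset.mem_univ x)]; simp
  have h3 : deg B x = S.card := rfl
  have h4 : 0 < v := x.pos
  omega

lemma sum_deg_sq {v : ℕ} (B : Finset (Finset (Fin v))) (h : IsPacking v 4 B) :
    ∑ x : Fin v, deg B x * deg B x ≤ B.card * B.card + 3 * B.card := by
  classical
  have key : ∑ x : Fin v, deg B x * deg B x = ∑ b ∈ B, ∑ c ∈ B, (b ∩ c).card := by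
    simp only [deg, Finset.card_filter, Finset.sum_mul_sum]
    rw [Finset.sum_comm]
    refine Finset.sum_congr rfl (fun b _ => ?_)
    rw [Finset.sum_comm]
    refine Finset.sum_congr rfl (fun c _ => ?_)
    have e : ∀ x : Fin v, (if x ∈ b then 1 else 0) * (if x ∈ c then 1 else 0)
        = if x ∈ b ∩ c then 1 else 0 := by
      intro x; by_cases hb : x ∈ b <;> by_cases hc : x ∈ c <;> simp [hb, hc]
    simp only [e]
    exact sum_ite_card _
  rw [key]
  calc ∑ b ∈ B, ∑ c ∈ B, (b ∩ c).card
      ≤ ∑ b ∈ B, ∑ c ∈ B, (if b = c then 4 else 1) := by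
        apply Finset.sum_le_sum; intro b hb
        apply Finset.sum_le_sum; intro c hc
        by_cases hbc : b = c
        · subst hbc; rw [if_pos rfl, Finset.inter_self, h.1 b hb]
        · simp only [hbc, if_false]
          exact h.2 b hb c hc hbc
    _ = B.card * B.card + 3 * B.card := by
        have e : ∀ b ∈ B, ∑ c ∈ B, (if b = c then 4 else 1) = 3 + B.card := by
          intro b hb
          have : ∀ c : Finset (Fin v), (if b = c then (4:ℕ) else 1) = (if b = c then 3 else 0) + 1 := by
            intro c; by_cases hbc : b = c <;> simp [hbc]
          simp only [this, Finset.sum_add_distrib, Finset.sum_const, smul_eq_mul, mul_one,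
            Finset.sum_ite_eq, hb, if_pos]
        rw [Finset.sum_congr rfl e, Finset.sum_const, smul_eq_mul]
        ring

lemma ptwise (d D : ℕ) : 2*D*d + D ≤ d*d + d + D*D := by
  rcases Nat.le_total d D with h | h
  · obtain ⟨e, rfl⟩ := Nat.exists_eq_add_of_le h
    have he : e ≤ e * e := by
      rcases Nat.eq_zero_or_pos e with rfl | hp
      · simp
      · exact Nat.le_mul_of_pos_left e hp
    nlinarith [he]
  · obtain ⟨e, rfl⟩ := Nat.exists_eq_add_of_le h
    nlinarith [Nat.zero_le (e*e), Nat.zero_le e]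
lemma packing_card_bound {v : ℕ} (D : ℕ) (B : Finset (Finset (Fin v)))
    (h : IsPacking v 4 B) (hD : v ≤ 3*D+3) :
    4*B.card ≤ v*D ∧ 8*D*B.card + v*D ≤ B.card*B.card + 7*B.card + v*D*D := by
  have hsd := sum_deg B h.1
  have hdegD : ∀ x : Fin v, deg B x ≤ D := by
    intro x; have := deg_le B h x; omega
  constructor
  · calc 4*B.card = ∑ x : Fin v, deg B x := hsd.symm
      _ ≤ ∑ _x : Fin v, D := Finset.sum_le_sum (fun x _ => hdegD x)
      _ = v * D := by simp [Finset.sum_const, mul_comm]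
  · have h1 : ∑ x : Fin v, (2*D*(deg B x) + D) ≤ ∑ x : Fin v, (deg B x * deg B x + deg B x + D*D) :=
      Finset.sum_le_sum (fun x _ => ptwise (deg B x) D)
    have h2 : ∑ x : Fin v, (2*D*(deg B x) + D) = 8*D*B.card + v*D := by
      rw [Finset.sum_add_distrib, ← Finset.mul_sum, hsd, Finset.sum_const, smul_eq_mul]
      simp [Finset.card_univ]; ring
    have h3 : ∑ x : Fin v, (deg B x * deg B x + deg B x + D*D)
        = (∑ x : Fin v, deg B x * deg B x) + 4*B.card + v*D*D := by
      rw [Finset.sum_add_distrib, Finset.sum_add_distrib, hsd, Finset.sum_const, smul_eq_mul]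
      simp [Finset.card_univ]; ring
    have h4 := sum_deg_sq B h
    omega

lemma small_bound {v : ℕ} (B : Finset (Finset (Fin v))) (h : IsPacking v 4 B)
    (hv4 : 4 ≤ v) (hv13 : v ≤ 13) :
    B.card ≤ [1,1,1,2,2,3,5,6,9,13][v - 4]! := by
  interval_cases v
  · obtain ⟨h1, h2⟩ := packing_card_bound 1 B h (by norm_num); simp; omega
  · obtain ⟨h1, h2⟩ := packing_card_bound 1 B h (by norm_num); simp; omega
  · obtain ⟨h1, h2⟩ := packing_card_bound 1 B h (by norm_num); simp; omega
  · obtain ⟨h1, h2⟩ := packing_card_bound 2 B h (by norm_num); simp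
    set m := B.card with hm
    have hub : m ≤ 3 := by omega
    interval_cases m <;> omega
  · obtain ⟨h1, h2⟩ := packing_card_bound 2 B h (by norm_num); simp
    set m := B.card with hm
    have hub : m ≤ 4 := by omega
    interval_cases m <;> omega
  · obtain ⟨h1, h2⟩ := packing_card_bound 2 B h (by norm_num); simp
    set m := B.card with hm
    have hub : m ≤ 4 := by omega
    interval_cases m <;> omega
  · obtain ⟨h1, h2⟩ := packing_card_bound 3 B h (by norm_num); simp
    set m := B.card with hm
    have hub : m ≤ 7 := by omega
    interval_cases m <;> omega
  · obtain ⟨h1, h2⟩ := packing_card_bound 3 B h (by norm_num); simp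
    set m := B.card with hm
    have hub : m ≤ 8 := by omega
    interval_cases m <;> omega
  · obtain ⟨h1, h2⟩ := packing_card_bound 3 B h (by norm_num); simp; omega
  · obtain ⟨h1, h2⟩ := packing_card_bound 4 B h (by norm_num); simp; omega

def Intersecting {v : ℕ} (B : Finset (Finset (Fin v))) : Prop :=
  ∀ b₁ ∈ B, ∀ b₂ ∈ B, b₁ ≠ b₂ → ¬ Disjoint b₁ b₂

lemma inter_struct {v : ℕ} (B : Finset (Finset (Fin v))) (h : IsPacking v 4 B)
    (hint : Intersecting B) : B.card ≤ 13 ∨ 3 * B.card + 1 ≤ v := by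
  classical
  rcases B.eq_empty_or_nonempty with rfl | ⟨b0, hb0⟩
  · left; simp
  by_cases hcom : ∃ x : Fin v, ∀ b ∈ B, x ∈ b
  · right
    obtain ⟨x, hx⟩ := hcom
    have hfe : B.filter (fun b => x ∈ b) = B := Finset.filter_eq_self.mpr hx
    have hd : B.card = deg B x := by rw [deg, hfe]
    have := deg_le B h x
    omega
  · left
    push_neg at hcom
    have hdeg4 : ∀ x : Fin v, deg B x ≤ 4 := by
      intro x
      obtain ⟨b', hb'B, hxb'⟩ := hcom x
      set S := B.filter (fun b => x ∈ b) with hSdef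
      have hS : ∀ b ∈ S, (b ∩ b').Nonempty := by
        intro b hb
        rw [hSdef, Finset.mem_filter] at hb
        have hne : b ≠ b' := fun e => hxb' (e ▸ hb.2)
        obtain ⟨a, ha1, ha2⟩ := Finset.not_disjoint_iff.mp (hint b hb.1 b' hb'B hne)
        exact ⟨a, Finset.mem_inter.mpr ⟨ha1, ha2⟩⟩
      set f : Finset (Fin v) → Fin v :=
        fun b => if hne : (b ∩ b').Nonempty then hne.choose else x with hfdef
      have hfb : ∀ b ∈ S, f b ∈ b ∩ b' := by
        intro b hb
        have e : f b = if hne : (b ∩ b').Nonempty then hne.choose else x := rfl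
        rw [e, dif_pos (hS b hb)]
        exact (hS b hb).choose_spec
      have hmaps : ∀ b ∈ S, f b ∈ b' := fun b hb => (Finset.mem_inter.mp (hfb b hb)).2
      have hinj : Set.InjOn f ↑S := by
        intro b hbS c hcS hfbc
        simp only [Finset.mem_coe] at hbS hcS
        by_contra hne
        have hbF := Finset.mem_filter.mp hbS
        have hcF := Finset.mem_filter.mp hcS
        have hp1 : f b ∈ b ∩ c := by
          have h1 := (Finset.mem_inter.mp (hfb b hbS)).1
          have h2 := (Finset.mem_inter.mp (hfb c hcS)).1
          exact Finset.mem_inter.mpr ⟨h1, hfbc ▸ h2⟩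
        have hp2 : x ∈ b ∩ c := Finset.mem_inter.mpr ⟨hbF.2, hcF.2⟩
        have hpx : f b ≠ x := fun e => hxb' (e ▸ hmaps b hbS)
        have := Finset.one_lt_card.mpr ⟨f b, hp1, x, hp2, hpx⟩
        have := h.2 b hbF.1 c hcF.1 hne
        omega
      have hcardle : S.card ≤ b'.card := Finset.card_le_card_of_injOn f hmaps hinj
      have : deg B x = S.card := rfl
      rw [h.1 b' hb'B] at hcardle
      omega
    have hsub : B ⊆ insert b0 (b0.biUnion (fun x => (B.filter (fun b => x ∈ b)).erase b0)) := by
      intro b hb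
      by_cases hbb0 : b = b0
      · exact hbb0 ▸ Finset.mem_insert_self _ _
      · apply Finset.mem_insert_of_mem
        obtain ⟨a, ha1, ha2⟩ := Finset.not_disjoint_iff.mp (hint b hb b0 hb0 hbb0)
        apply Finset.mem_biUnion.mpr
        exact ⟨a, ha2, Finset.mem_erase.mpr ⟨hbb0, Finset.mem_filter.mpr ⟨hb, ha1⟩⟩⟩
    have hb0card : b0.card = 4 := h.1 b0 hb0
    calc B.card ≤ (insert b0 (b0.biUnion (fun x => (B.filter (fun b => x ∈ b)).erase b0))).card :=
          Finset.card_le_card hsub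
      _ ≤ (b0.biUnion (fun x => (B.filter (fun b => x ∈ b)).erase b0)).card + 1 :=
          Finset.card_insert_le _ _
      _ ≤ (∑ x ∈ b0, ((B.filter (fun b => x ∈ b)).erase b0).card) + 1 := by
          have := Finset.card_biUnion_le (s := b0) (t := fun x => (B.filter (fun b => x ∈ b)).erase b0)
          omega
      _ ≤ (∑ _x ∈ b0, 3) + 1 := by
          apply Nat.add_le_add_right
          apply Finset.sum_le_sum
          intro x hx
          have hb0mem : b0 ∈ B.filter (fun b => x ∈ b) := Finset.mem_filter.mpr ⟨hb0, hx⟩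
          have := Finset.card_erase_of_mem hb0mem
          have hdx := hdeg4 x
          have : deg B x = (B.filter (fun b => x ∈ b)).card := rfl
          omega
      _ ≤ 13 := by rw [Finset.sum_const, smul_eq_mul, hb0card]

lemma maxppc_one {v : ℕ} (B : Finset (Finset (Fin v))) (hne : B.Nonempty)
    (hint : Intersecting B) (hpack : IsPacking v 4 B) : MaxPPCSize B 1 := by
  constructor
  · obtain ⟨b, hb⟩ := hne
    exact ⟨{b}, ⟨Finset.singleton_subset_iff.mpr hb, by simp⟩, Finset.card_singleton b⟩
  · intro P hP
    by_contra hc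
    push_neg at hc
    obtain ⟨b₁, hb₁, b₂, hb₂, hne12⟩ := Finset.one_lt_card.mp hc
    exact hint b₁ (hP.1 hb₁) b₂ (hP.1 hb₂) hne12 (hP.2 b₁ hb₁ b₂ hb₂ hne12)

lemma maxppc_intersecting {v : ℕ} (B : Finset (Finset (Fin v))) (h : MaxPPCSize B 1) :
    Intersecting B := by
  intro b₁ h₁ b₂ h₂ hne hdisj
  have hppc : IsPPC B {b₁, b₂} := by
    constructor
    · intro b hb
      rcases Finset.mem_insert.mp hb with rfl | hb
      · exact h₁
      · exact (Finset.mem_singleton.mp hb) ▸ h₂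
    · intro c₁ hc₁ c₂ hc₂ hnec
      simp only [Finset.mem_insert, Finset.mem_singleton] at hc₁ hc₂
      rcases hc₁ with rfl | rfl <;> rcases hc₂ with rfl | rfl
      · exact absurd rfl hnec
      · exact hdisj
      · exact hdisj.symm
      · exact absurd rfl hnec
  have := h.2 _ hppc
  rw [Finset.card_insert_of_notMem (by simpa using hne), Finset.card_singleton] at this
  omega

lemma nat_sSup_eq {S : Set ℕ} {m : ℕ} (h1 : m ∈ S) (h2 : ∀ x ∈ S, x ≤ m) : sSup S = m :=
  le_antisymm (csSup_le ⟨m, h1⟩ h2) (le_csSup ⟨m, h2⟩ h1)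

lemma beta_eq {v N : ℕ} (B : Finset (Finset (Fin v)))
    (hpack : IsPacking v 4 B) (hint : Intersecting B) (hne : B.Nonempty)
    (hcard : B.card = N)
    (hub : ∀ B' : Finset (Finset (Fin v)), IsPacking v 4 B' → Intersecting B' → B'.card ≤ N) :
    beta 1 v 4 = N := by
  apply nat_sSup_eq
  · exact ⟨B, hpack, maxppc_one B hne hint hpack, hcard⟩
  · rintro x ⟨B', hp', hm', rfl⟩
    exact hub B' hp' (maxppc_intersecting B' hm')

lemma packing_eq {v N : ℕ} (B : Finset (Finset (Fin v)))
    (hpack : IsPacking v 4 B) (hcard : B.card = N)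
    (hub : ∀ B' : Finset (Finset (Fin v)), IsPacking v 4 B' → B'.card ≤ N) :
    packingNumber v 4 = N := by
  apply nat_sSup_eq
  · exact ⟨B, hpack, hcard⟩
  · rintro x ⟨B', hp', rfl⟩
    exact hub B' hp'

def C4 : Finset (Finset (Fin 4)) := { {0,1,2,3} }

set_option maxRecDepth 40000 in
lemma hC4 : IsPacking 4 4 C4 ∧ Intersecting C4 ∧ C4.card = 1 ∧ C4.Nonempty := by
  refine ⟨⟨?_, ?_⟩, ?_, by decide, by decide⟩
  · intro b hb; fin_cases hb <;> decide
  · intro b1 h1 b2 h2; fin_cases h1 <;> fin_cases h2 <;> decide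
  · intro b1 h1 b2 h2; fin_cases h1 <;> fin_cases h2 <;> decide


def C5 : Finset (Finset (Fin 5)) := { {0,1,2,3} }

set_option maxRecDepth 40000 in
lemma hC5 : IsPacking 5 4 C5 ∧ Intersecting C5 ∧ C5.card = 1 ∧ C5.Nonempty := by
  refine ⟨⟨?_, ?_⟩, ?_, by decide, by decide⟩
  · intro b hb; fin_cases hb <;> decide
  · intro b1 h1 b2 h2; fin_cases h1 <;> fin_cases h2 <;> decide
  · intro b1 h1 b2 h2; fin_cases h1 <;> fin_cases h2 <;> decide


def C6 : Finset (Finset (Fin 6)) := { {0,1,2,3} }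

set_option maxRecDepth 40000 in
lemma hC6 : IsPacking 6 4 C6 ∧ Intersecting C6 ∧ C6.card = 1 ∧ C6.Nonempty := by
  refine ⟨⟨?_, ?_⟩, ?_, by decide, by decide⟩
  · intro b hb; fin_cases hb <;> decide
  · intro b1 h1 b2 h2; fin_cases h1 <;> fin_cases h2 <;> decide
  · intro b1 h1 b2 h2; fin_cases h1 <;> fin_cases h2 <;> decide


def C7 : Finset (Finset (Fin 7)) := { {0,1,2,3}, {3,4,5,6} }

set_option maxRecDepth 40000 in
lemma hC7 : IsPacking 7 4 C7 ∧ Intersecting C7 ∧ C7.card = 2 ∧ C7.Nonempty := by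
  refine ⟨⟨?_, ?_⟩, ?_, by decide, by decide⟩
  · intro b hb; fin_cases hb <;> decide
  · intro b1 h1 b2 h2; fin_cases h1 <;> fin_cases h2 <;> decide
  · intro b1 h1 b2 h2; fin_cases h1 <;> fin_cases h2 <;> decide


def C8 : Finset (Finset (Fin 8)) := { {0,1,2,3}, {3,4,5,6} }

set_option maxRecDepth 40000 in
lemma hC8 : IsPacking 8 4 C8 ∧ Intersecting C8 ∧ C8.card = 2 ∧ C8.Nonempty := by
  refine ⟨⟨?_, ?_⟩, ?_, by decide, by decide⟩
  · intro b hb; fin_cases hb <;> decide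
  · intro b1 h1 b2 h2; fin_cases h1 <;> fin_cases h2 <;> decide
  · intro b1 h1 b2 h2; fin_cases h1 <;> fin_cases h2 <;> decide


def C9 : Finset (Finset (Fin 9)) := { {0,1,2,3}, {3,4,5,6}, {0,4,7,8} }

set_option maxRecDepth 40000 in
lemma hC9 : IsPacking 9 4 C9 ∧ Intersecting C9 ∧ C9.card = 3 ∧ C9.Nonempty := by
  refine ⟨⟨?_, ?_⟩, ?_, by decide, by decide⟩
  · intro b hb; fin_cases hb <;> decide
  · intro b1 h1 b2 h2; fin_cases h1 <;> fin_cases h2 <;> decide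
  · intro b1 h1 b2 h2; fin_cases h1 <;> fin_cases h2 <;> decide


def C10 : Finset (Finset (Fin 10)) := { {0,1,2,3}, {0,4,5,6}, {1,4,7,8}, {2,5,7,9}, {3,6,8,9} }

set_option maxRecDepth 40000 in
lemma hC10 : IsPacking 10 4 C10 ∧ Intersecting C10 ∧ C10.card = 5 ∧ C10.Nonempty := by
  refine ⟨⟨?_, ?_⟩, ?_, by decide, by decide⟩
  · intro b hb; fin_cases hb <;> decide
  · intro b1 h1 b2 h2; fin_cases h1 <;> fin_cases h2 <;> decide
  · intro b1 h1 b2 h2; fin_cases h1 <;> fin_cases h2 <;> decide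


def C11 : Finset (Finset (Fin 11)) := { {0,2,3,4}, {0,5,6,7}, {0,8,9,10}, {1,2,5,8}, {1,3,6,9}, {1,4,7,10} }

set_option maxRecDepth 40000 in
lemma hC11 : IsPacking 11 4 C11 ∧ Intersecting C11 ∧ C11.card = 6 ∧ C11.Nonempty := by
  refine ⟨⟨?_, ?_⟩, ?_, by decide, by decide⟩
  · intro b hb; fin_cases hb <;> decide
  · intro b1 h1 b2 h2; fin_cases h1 <;> fin_cases h2 <;> decide
  · intro b1 h1 b2 h2; fin_cases h1 <;> fin_cases h2 <;> decide


def C12 : Finset (Finset (Fin 12)) := { {0,3,6,9}, {1,4,7,9}, {2,5,8,9}, {0,5,7,10}, {1,3,8,10}, {2,4,6,10}, {0,4,8,11}, {1,5,6,11}, {2,3,7,11} }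

set_option maxRecDepth 40000 in
lemma hC12 : IsPacking 12 4 C12 ∧ Intersecting C12 ∧ C12.card = 9 ∧ C12.Nonempty := by
  refine ⟨⟨?_, ?_⟩, ?_, by decide, by decide⟩
  · intro b hb; fin_cases hb <;> decide
  · intro b1 h1 b2 h2; fin_cases h1 <;> fin_cases h2 <;> decide
  · intro b1 h1 b2 h2; fin_cases h1 <;> fin_cases h2 <;> decide


def C13 : Finset (Finset (Fin 13)) := { {0,1,3,9}, {1,2,4,10}, {2,3,5,11}, {3,4,6,12}, {0,4,5,7}, {1,5,6,8}, {2,6,7,9}, {3,7,8,10}, {4,8,9,11}, {5,9,10,12}, {0,6,10,11}, {1,7,11,12}, {0,2,8,12} }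

set_option maxRecDepth 40000 in
lemma hC13 : IsPacking 13 4 C13 ∧ Intersecting C13 ∧ C13.card = 13 ∧ C13.Nonempty := by
  refine ⟨⟨?_, ?_⟩, ?_, by decide, by decide⟩
  · intro b hb; fin_cases hb <;> decide
  · intro b1 h1 b2 h2; fin_cases h1 <;> fin_cases h2 <;> decide
  · intro b1 h1 b2 h2; fin_cases h1 <;> fin_cases h2 <;> decide

lemma embed13 {v : ℕ} (hv : 13 ≤ v) : ∃ B : Finset (Finset (Fin v)),
    IsPacking v 4 B ∧ Intersecting B ∧ B.card = 13 ∧ B.Nonempty := by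
  classical
  set f := Fin.castLEEmb hv with hf
  refine ⟨C13.image (fun b => b.map f), ⟨?_, ?_⟩, ?_, ?_, ?_⟩
  · intro b hb
    obtain ⟨a, ha, rfl⟩ := Finset.mem_image.mp hb
    rw [Finset.card_map]
    exact hC13.1.1 a ha
  · intro b₁ h₁ b₂ h₂ hne
    obtain ⟨a₁, ha₁, rfl⟩ := Finset.mem_image.mp h₁
    obtain ⟨a₂, ha₂, rfl⟩ := Finset.mem_image.mp h₂
    have hane : a₁ ≠ a₂ := fun e => hne (by rw [e])
    rw [← Finset.map_inter, Finset.card_map]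
    exact hC13.1.2 a₁ ha₁ a₂ ha₂ hane
  · intro b₁ h₁ b₂ h₂ hne
    obtain ⟨a₁, ha₁, rfl⟩ := Finset.mem_image.mp h₁
    obtain ⟨a₂, ha₂, rfl⟩ := Finset.mem_image.mp h₂
    have hane : a₁ ≠ a₂ := fun e => hne (by rw [e])
    have hnd := hC13.2.1 a₁ ha₁ a₂ ha₂ hane
    obtain ⟨x, hx1, hx2⟩ := Finset.not_disjoint_iff.mp hnd
    exact Finset.not_disjoint_iff.mpr ⟨f x, Finset.mem_map_of_mem f hx1, Finset.mem_map_of_mem f hx2⟩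
  · rw [Finset.card_image_of_injective _ (Finset.map_injective f), hC13.2.2.1]
  · exact ⟨Finset.map f {0,1,3,9}, Finset.mem_image_of_mem _ (by decide)⟩

open Fin.NatCast in
lemma sunflower {v : ℕ} (hv : 4 ≤ v) : ∃ B : Finset (Finset (Fin v)),
    IsPacking v 4 B ∧ Intersecting B ∧ B.card = (v-1)/3 ∧ B.Nonempty := by
  classical
  haveI : NeZero v := ⟨by omega⟩
  set k := (v-1)/3 with hk
  have hk1 : 1 ≤ k := by omega
  have hkv : 3*k + 1 ≤ v := by omega
  set f : ℕ → Finset (Fin v) :=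
    fun i => insert (0 : Fin v) (insert ((3*i+1 : ℕ) : Fin v)
      (insert ((3*i+2 : ℕ) : Fin v) {((3*i+3 : ℕ) : Fin v)})) with hf
  have hval : ∀ n : ℕ, n < v → ((n : Fin v)).val = n := by
    intro n hn; rw [Fin.val_natCast, Nat.mod_eq_of_lt hn]
  have hmem : ∀ i, ∀ x : Fin v, x ∈ f i ↔
      x = (0 : Fin v) ∨ x = ((3*i+1 : ℕ) : Fin v) ∨ x = ((3*i+2 : ℕ) : Fin v) ∨ x = ((3*i+3 : ℕ) : Fin v) := by
    intro i x
    rw [hf]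
    simp [Finset.mem_insert, Finset.mem_singleton]
  have hvals : ∀ i, i < k → ∀ a, 1 ≤ a → a ≤ 3 → ((3*i+a : ℕ) : Fin v).val = 3*i+a := by
    intro i hi a ha1 ha3
    exact hval _ (by omega)
  have hzero : (0 : Fin v).val = 0 := rfl
  have hcard : ∀ i, i < k → (f i).card = 4 := by
    intro i hi
    have V1 := hvals i hi 1 (by omega) (by omega)
    have V2 := hvals i hi 2 (by omega) (by omega)
    have V3 := hvals i hi 3 (by omega) (by omega)
    rw [hf]
    rw [Finset.card_insert_of_notMem, Finset.card_insert_of_notMem,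
        Finset.card_insert_of_notMem, Finset.card_singleton]
    · intro hmm
      rw [Finset.mem_singleton, Fin.ext_iff, V2, V3] at hmm; omega
    · intro hmm
      rw [Finset.mem_insert, Finset.mem_singleton, Fin.ext_iff, Fin.ext_iff, V1, V2, V3] at hmm; omega
    · intro hmm
      rw [Finset.mem_insert, Finset.mem_insert, Finset.mem_singleton,
        Fin.ext_iff, Fin.ext_iff, Fin.ext_iff, hzero, V1, V2, V3] at hmm; omega
  have hsub : ∀ i j, i < k → j < k → i ≠ j → f i ∩ f j ⊆ {(0 : Fin v)} := by
    intro i j hi hj hij x hx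
    rw [Finset.mem_inter, hmem i x, hmem j x] at hx
    rw [Finset.mem_singleton]
    obtain ⟨hxi, hxj⟩ := hx
    rcases hxi with rfl | hxi
    · rfl
    exfalso
    rcases hxj with rfl | hxj
    · rcases hxi with e | e | e <;>
      · have := congrArg Fin.val e
        rw [hzero] at this
        rw [hvals i hi _ (by omega) (by omega)] at this
        omega
    have : ∃ a b, 1 ≤ a ∧ a ≤ 3 ∧ 1 ≤ b ∧ b ≤ 3 ∧ (3*i+a : ℕ) = (3*j+b : ℕ) := by
      rcases hxi with e | e | e <;> rcases hxj with e' | e' | e' <;>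
      · rw [e] at e'
        have := congrArg Fin.val e'
        rw [hvals i hi _ (by omega) (by omega), hvals j hj _ (by omega) (by omega)] at this
        exact ⟨_, _, by omega, by omega, by omega, by omega, this⟩
    obtain ⟨a, b, ha1, ha3, hb1, hb3, heq⟩ := this
    omega
  refine ⟨(Finset.range k).image f, ⟨?_, ?_⟩, ?_, ?_, ?_⟩
  · intro b hb
    obtain ⟨i, hi, rfl⟩ := Finset.mem_image.mp hb
    exact hcard i (Finset.mem_range.mp hi)
  · intro b₁ h₁ b₂ h₂ hne
    obtain ⟨i, hi, rfl⟩ := Finset.mem_image.mp h₁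
    obtain ⟨j, hj, rfl⟩ := Finset.mem_image.mp h₂
    have hij : i ≠ j := fun e => hne (by rw [e])
    calc (f i ∩ f j).card ≤ ({(0:Fin v)} : Finset (Fin v)).card :=
          Finset.card_le_card (hsub i j (Finset.mem_range.mp hi) (Finset.mem_range.mp hj) hij)
      _ = 1 := Finset.card_singleton _
  · intro b₁ h₁ b₂ h₂ _
    obtain ⟨i, hi, rfl⟩ := Finset.mem_image.mp h₁
    obtain ⟨j, hj, rfl⟩ := Finset.mem_image.mp h₂
    exact Finset.not_disjoint_iff.mpr ⟨0, (hmem i 0).mpr (Or.inl rfl), (hmem j 0).mpr (Or.inl rfl)⟩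
  · rw [Finset.card_image_of_injOn, Finset.card_range]
    intro i hi j hj hfij
    simp only [Finset.coe_range, Set.mem_Iio] at hi hj
    have h1 : ((3*i+1 : ℕ) : Fin v) ∈ f i := (hmem i _).mpr (Or.inr (Or.inl rfl))
    rw [hfij, hmem j _] at h1
    have V1 := hvals i hi 1 (by omega) (by omega)
    rcases h1 with e | e | e | e <;>
    · have := congrArg Fin.val e
      rw [V1] at this
      first
      | (rw [hzero] at this; omega)
      | (rw [hvals j hj _ (by omega) (by omega)] at this; omega)
  · apply Finset.Nonempty.image
    exact ⟨0, Finset.mem_range.mpr (by omega)⟩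

theorem stmt15 :
    (∀ v : ℕ, 4 ≤ v → v ≤ 13 → beta 1 v 4 = packingNumber v 4) ∧
    (∀ v : ℕ, 14 ≤ v → v ≤ 39 → beta 1 v 4 = 13) ∧
    (∀ v : ℕ, 40 ≤ v → beta 1 v 4 = (v - 1) / 3) := by
  refine ⟨?_, ?_, ?_⟩
  · intro v h4 h13
    interval_cases v
    · rw [beta_eq C4 hC4.1 hC4.2.1 hC4.2.2.2 hC4.2.2.1
        (fun B' hp _ => by simpa using small_bound B' hp (by norm_num) (by norm_num)),
        packing_eq C4 hC4.1 hC4.2.2.1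
        (fun B' hp => by simpa using small_bound B' hp (by norm_num) (by norm_num))]
    · rw [beta_eq C5 hC5.1 hC5.2.1 hC5.2.2.2 hC5.2.2.1
        (fun B' hp _ => by simpa using small_bound B' hp (by norm_num) (by norm_num)),
        packing_eq C5 hC5.1 hC5.2.2.1
        (fun B' hp => by simpa using small_bound B' hp (by norm_num) (by norm_num))]
    · rw [beta_eq C6 hC6.1 hC6.2.1 hC6.2.2.2 hC6.2.2.1
        (fun B' hp _ => by simpa using small_bound B' hp (by norm_num) (by norm_num)),
        packing_eq C6 hC6.1 hC6.2.2.1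
        (fun B' hp => by simpa using small_bound B' hp (by norm_num) (by norm_num))]
    · rw [beta_eq C7 hC7.1 hC7.2.1 hC7.2.2.2 hC7.2.2.1
        (fun B' hp _ => by simpa using small_bound B' hp (by norm_num) (by norm_num)),
        packing_eq C7 hC7.1 hC7.2.2.1
        (fun B' hp => by simpa using small_bound B' hp (by norm_num) (by norm_num))]
    · rw [beta_eq C8 hC8.1 hC8.2.1 hC8.2.2.2 hC8.2.2.1
        (fun B' hp _ => by simpa using small_bound B' hp (by norm_num) (by norm_num)),
        packing_eq C8 hC8.1 hC8.2.2.1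
        (fun B' hp => by simpa using small_bound B' hp (by norm_num) (by norm_num))]
    · rw [beta_eq C9 hC9.1 hC9.2.1 hC9.2.2.2 hC9.2.2.1
        (fun B' hp _ => by simpa using small_bound B' hp (by norm_num) (by norm_num)),
        packing_eq C9 hC9.1 hC9.2.2.1
        (fun B' hp => by simpa using small_bound B' hp (by norm_num) (by norm_num))]
    · rw [beta_eq C10 hC10.1 hC10.2.1 hC10.2.2.2 hC10.2.2.1
        (fun B' hp _ => by simpa using small_bound B' hp (by norm_num) (by norm_num)),
        packing_eq C10 hC10.1 hC10.2.2.1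
        (fun B' hp => by simpa using small_bound B' hp (by norm_num) (by norm_num))]
    · rw [beta_eq C11 hC11.1 hC11.2.1 hC11.2.2.2 hC11.2.2.1
        (fun B' hp _ => by simpa using small_bound B' hp (by norm_num) (by norm_num)),
        packing_eq C11 hC11.1 hC11.2.2.1
        (fun B' hp => by simpa using small_bound B' hp (by norm_num) (by norm_num))]
    · rw [beta_eq C12 hC12.1 hC12.2.1 hC12.2.2.2 hC12.2.2.1
        (fun B' hp _ => by simpa using small_bound B' hp (by norm_num) (by norm_num)),
        packing_eq C12 hC12.1 hC12.2.2.1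
        (fun B' hp => by simpa using small_bound B' hp (by norm_num) (by norm_num))]
    · rw [beta_eq C13 hC13.1 hC13.2.1 hC13.2.2.2 hC13.2.2.1
        (fun B' hp _ => by simpa using small_bound B' hp (by norm_num) (by norm_num)),
        packing_eq C13 hC13.1 hC13.2.2.1
        (fun B' hp => by simpa using small_bound B' hp (by norm_num) (by norm_num))]
  · intro v h14 h39
    obtain ⟨B, hp, hi, hc, hn⟩ := embed13 (v := v) (by omega)
    refine beta_eq B hp hi hn hc ?_
    intro B' hp' hi'
    rcases inter_struct B' hp' hi' with h | h
    · exact h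
    · omega
  · intro v h40
    obtain ⟨B, hp, hi, hc, hn⟩ := sunflower (v := v) (by omega)
    refine beta_eq B hp hi hn hc ?_
    intro B' hp' hi'
    rcases inter_struct B' hp' hi' with h | h
    · omega
    · omega
end

section
/- β(3,13,4) = 7: there exists a (13,4)-packing with 7 blocks whose maximum partial parallel class has size 3, and no (13,4)-packing with 8 or more blocks has maximum partial parallel class of size 3. -/
/-- The explicit 7-block packing. -/
def B7 : Finset (Finset (Fin 13)) :=
  {{0,1,2,3},{4,5,6,7},{8,9,10,11},{0,4,8,12},{1,5,9,12},{2,6,10,12},{3,7,11,12}}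

/-- Any family of pairwise disjoint 4-subsets of a 13-point set has at most 3 members. -/
lemma ppc_card_le {B P : Finset (Finset (Fin 13))} (hc : ∀ b ∈ B, b.card = 4)
    (hP : IsPPC B P) : P.card ≤ 3 := by
  obtain ⟨hPB, hPd⟩ := hP
  have h1 : (P.biUnion id).card = ∑ p ∈ P, (id p).card :=
    Finset.card_biUnion (fun p hp q hq hpq => hPd p hp q hq hpq)
  have h2 : ∑ p ∈ P, (id p).card = 4 * P.card := by
    have : ∑ p ∈ P, (id p).card = ∑ _p ∈ P, 4 :=
      Finset.sum_congr rfl (fun p hp => hc p (hPB hp))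
    rw [this, Finset.sum_const, smul_eq_mul]; ring
  have h3 : (P.biUnion id).card ≤ 13 := by
    have := Finset.card_le_univ (P.biUnion id)
    simpa using this
  omega

theorem stmt16 :
    (∃ B : Finset (Finset (Fin 13)),
      IsPacking 13 4 B ∧ MaxPPCSize B 3 ∧ B.card = 7) ∧
    (∀ B : Finset (Finset (Fin 13)),
      IsPacking 13 4 B → MaxPPCSize B 3 → B.card ≤ 7) := by
  constructor
  · have hcards : ∀ b ∈ B7, b.card = 4 := by
      intro b hb; fin_cases hb <;> rfl
    have hpack : IsPacking 13 4 B7 := by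
      refine ⟨hcards, ?_⟩
      intro b₁ h₁ b₂ h₂
      fin_cases h₁ <;> fin_cases h₂ <;> decide
    refine ⟨B7, hpack, ⟨⟨{{0,1,2,3},{4,5,6,7},{8,9,10,11}}, ⟨?_, ?_⟩, ?_⟩, ?_⟩, by decide⟩
    · decide
    · intro b₁ h₁ b₂ h₂
      fin_cases h₁ <;> fin_cases h₂ <;> decide
    · decide
    · intro P hP
      exact ppc_card_le hcards hP
  · rintro B ⟨hcard, hpair⟩ ⟨⟨P, ⟨hPB, hPdisj⟩, hP3⟩, -⟩
    -- the union of the 3 disjoint blocks covers 12 points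
    set U : Finset (Fin 13) := P.biUnion id with hU
    have hUcard : U.card = 12 := by
      have h1 : U.card = ∑ p ∈ P, (id p).card :=
        Finset.card_biUnion (fun p hp q hq hpq => hPdisj p hp q hq hpq)
      have h2 : ∑ p ∈ P, (id p).card = ∑ _p ∈ P, 4 :=
        Finset.sum_congr rfl (fun p hp => hcard p (hPB hp))
      rw [h1, h2, Finset.sum_const, smul_eq_mul, hP3]
    have hcompl : Uᶜ.card = 1 := by
      rw [Finset.card_compl, hUcard]
      rfl
    obtain ⟨x, hx⟩ := Finset.card_eq_one.mp hcompl
    -- every block outside P contains x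
    have hxall : ∀ b ∈ B \ P, x ∈ b := by
      intro b hb
      obtain ⟨hbB, hbP⟩ := Finset.mem_sdiff.mp hb
      by_contra hxb
      have hsub : b ⊆ U := by
        intro y hy
        by_contra hyU
        have : y ∈ Uᶜ := Finset.mem_compl.mpr hyU
        rw [hx, Finset.mem_singleton] at this
        exact hxb (this ▸ hy)
      have hbeq : U ∩ b = b := Finset.inter_eq_right.mpr hsub
      have hb4 : b.card = 4 := hcard b hbB
      have hle : (U ∩ b).card ≤ ∑ p ∈ P, (p ∩ b).card := by
        rw [hU, Finset.biUnion_inter]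
        exact Finset.card_biUnion_le
      have hsum : ∑ p ∈ P, (p ∩ b).card ≤ ∑ p ∈ P, 1 := by
        apply Finset.sum_le_sum
        intro p hp
        exact hpair p (hPB hp) b hbB (fun h => hbP (h ▸ hp))
      rw [hbeq, hb4] at hle
      simp [hP3] at hsum
      omega
    -- blocks through x have pairwise disjoint residues
    have hd : ∀ b ∈ B \ P, ∀ b' ∈ B \ P, b ≠ b' →
        Disjoint (b.erase x) (b'.erase x) := by
      intro b hb b' hb' hne
      rw [Finset.disjoint_left]
      intro y hy hy'
      obtain ⟨hyx, hyb⟩ := Finset.mem_erase.mp hy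
      obtain ⟨-, hyb'⟩ := Finset.mem_erase.mp hy'
      have hBb := (Finset.mem_sdiff.mp hb).1
      have hBb' := (Finset.mem_sdiff.mp hb').1
      have h1 := hpair b hBb b' hBb' hne
      have h2 : 1 < (b ∩ b').card := by
        apply Finset.one_lt_card.mpr
        exact ⟨x, Finset.mem_inter.mpr ⟨hxall b hb, hxall b' hb'⟩,
          y, Finset.mem_inter.mpr ⟨hyb, hyb'⟩, fun h => hyx h.symm⟩
      omega
    -- so at most 4 of them
    have hBP : (B \ P).card ≤ 4 := by
      have hbu : ((B \ P).biUnion (fun b => b.erase x)).card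
          = ∑ b ∈ B \ P, (b.erase x).card := Finset.card_biUnion hd
      have hsub : (B \ P).biUnion (fun b => b.erase x) ⊆ Finset.univ.erase x := by
        intro y hy
        obtain ⟨b, hb, hyb⟩ := Finset.mem_biUnion.mp hy
        exact Finset.mem_erase.mpr ⟨(Finset.mem_erase.mp hyb).1, Finset.mem_univ y⟩
      have h12 : (Finset.univ.erase x : Finset (Fin 13)).card = 12 := by
        rw [Finset.card_erase_of_mem (Finset.mem_univ x)]
        rfl
      have hsum : ∑ b ∈ B \ P, (b.erase x).card = 3 * (B \ P).card := by
        have h2 : ∑ b ∈ B \ P, (b.erase x).card = ∑ _b ∈ B \ P, 3 :=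
          Finset.sum_congr rfl (fun b hb => by
            rw [Finset.card_erase_of_mem (hxall b hb),
              hcard b (Finset.mem_sdiff.mp hb).1])
        rw [h2, Finset.sum_const, smul_eq_mul]
        ring
      have := Finset.card_le_card hsub
      rw [hbu, hsum, h12] at this
      omega
    have hsplit : (B \ P).card + P.card = B.card :=
      Finset.card_sdiff_add_card_eq_card hPB
    omega
end

section
/- For all integers k ≥ 2, ρ ≥ 1 and v ≥ kρ, β(ρ,v,k) ≤ ρ·(k²(ρ−1)/2 + 1 + max{k(k−1), ⌊(v−kρ)/(k−1)⌋}). -/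
open Finset

lemma choose_sub_le {k ρ : ℕ} (hk : 2 ≤ k) (hρ : 1 ≤ ρ) :
    ρ * Nat.choose k 2 ≤ Nat.choose (k * ρ) 2 := by
  have hdvd : ∀ n : ℕ, 2 ∣ n * (n - 1) := by
    intro n
    rcases Nat.even_or_odd n with h | h
    · exact Dvd.dvd.mul_right h.two_dvd _
    · have : Even (n - 1) := by rcases h with ⟨m, hm⟩; exact ⟨m, by omega⟩
      exact Dvd.dvd.mul_left this.two_dvd _
  have e1 : Nat.choose k 2 * 2 = k * (k - 1) := by
    rw [Nat.choose_two_right]; exact Nat.div_mul_cancel (hdvd k)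
  have e2 : Nat.choose (k * ρ) 2 * 2 = (k * ρ) * (k * ρ - 1) := by
    rw [Nat.choose_two_right]; exact Nat.div_mul_cancel (hdvd (k * ρ))
  have hkρ : k ≤ k * ρ := Nat.le_mul_of_pos_right k hρ
  have key : (ρ * Nat.choose k 2) * 2 ≤ Nat.choose (k * ρ) 2 * 2 := by
    rw [e2, mul_assoc, e1]
    calc ρ * (k * (k - 1)) = (k * ρ) * (k - 1) := by ring
      _ ≤ (k * ρ) * (k * ρ - 1) := Nat.mul_le_mul_left _ (by omega)
  exact Nat.le_of_mul_le_mul_right key (by norm_num)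

lemma fiber_le {v k : ℕ} (hk : 2 ≤ k) {B : Finset (Finset (Fin v))}
    (hpack : IsPacking v k B) (Q c : Finset (Fin v)) (hc : c ∈ B)
    (y : Fin v) (hcQ : c ∩ Q = {y}) (x : Fin v) (hxy : x ≠ y)
    (S : Finset (Finset (Fin v))) (hSB : S ⊆ B)
    (hfib : ∀ b ∈ S, b ∩ Q = {x})
    (hmeet : ∀ b ∈ S, ¬ Disjoint b c) :
    S.card ≤ k - 1 := by
  classical
  have hw : ∀ b ∈ S, ∃ z, z ∈ b ∧ z ∈ c := fun b hb =>
    Finset.not_disjoint_iff.mp (hmeet b hb)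
  set f : Finset (Fin v) → Fin v :=
    fun b => if h : b ∈ S then (hw b h).choose else x with hf
  have hfs : ∀ b ∈ S, f b ∈ b ∧ f b ∈ c := by
    intro b hb
    simp only [hf, dif_pos hb]
    exact (hw b hb).choose_spec
  have hfQ : ∀ b ∈ S, f b ∉ Q := by
    intro b hb hQ
    have h1 : f b ∈ b ∩ Q := Finset.mem_inter.mpr ⟨(hfs b hb).1, hQ⟩
    have h2 : f b ∈ c ∩ Q := Finset.mem_inter.mpr ⟨(hfs b hb).2, hQ⟩
    rw [hfib b hb, Finset.mem_singleton] at h1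
    rw [hcQ, Finset.mem_singleton] at h2
    exact hxy (h1 ▸ h2)
  have hcard : S.card ≤ (c \ Q).card := by
    apply Finset.card_le_card_of_injOn f
    · intro b hb
      exact Finset.mem_sdiff.mpr ⟨(hfs b hb).2, hfQ b hb⟩
    · intro b hb b' hb' hbb'
      simp only [Finset.mem_coe] at hb hb'
      by_contra hne
      have hxb : x ∈ b ∩ Q := by rw [hfib b hb]; exact Finset.mem_singleton_self x
      have hxb' : x ∈ b' ∩ Q := by rw [hfib b' hb']; exact Finset.mem_singleton_self x
      have hxQ : x ∈ Q := (Finset.mem_inter.mp hxb).2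
      have hfb : f b ∈ b ∩ b' := by
        refine Finset.mem_inter.mpr ⟨(hfs b hb).1, ?_⟩
        rw [hbb']; exact (hfs b' hb').1
      have hxbb' : x ∈ b ∩ b' :=
        Finset.mem_inter.mpr ⟨(Finset.mem_inter.mp hxb).1, (Finset.mem_inter.mp hxb').1⟩
      have hne2 : x ≠ f b := fun h => hfQ b hb (h ▸ hxQ)
      have h2le : 1 < (b ∩ b').card :=
        Finset.one_lt_card.mpr ⟨x, hxbb', f b, hfb, hne2⟩
      have := hpack.2 b (hSB hb) b' (hSB hb') hne
      omega
  have hcQcard : (c ∩ Q).card = 1 := by rw [hcQ]; simp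
  have hck : c.card = k := hpack.1 c hc
  have := Finset.card_sdiff_add_card_inter c Q
  omega

lemma block_star_bound {v k : ℕ} (hk : 2 ≤ k) {B P : Finset (Finset (Fin v))}
    (hpack : IsPacking v k B) (hPPC : IsPPC B P)
    (hmax : ∀ P', IsPPC B P' → P'.card ≤ P.card)
    {p : Finset (Fin v)} (hp : p ∈ P)
    (Q : Finset (Fin v)) (hQP : ∀ q ∈ P, q ⊆ Q)
    (S : Finset (Finset (Fin v)))
    (hSB : ∀ b ∈ S, b ∈ B ∧ b ∉ P ∧ ∃ x ∈ p, b ∩ Q = {x}) :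
    S.card ≤ max (k * (k - 1)) ((v - Q.card) / (k - 1)) := by
  classical
  -- attach points lie in p
  have hattach : ∀ b ∈ S, ∀ x, b ∩ Q = {x} → x ∈ p := by
    intro b hb x hx
    obtain ⟨-, -, x', hx'p, hbx'⟩ := hSB b hb
    have : x = x' := by
      have : (x : Fin v) ∈ ({x'} : Finset (Fin v)) := by rw [← hbx', hx]; simp
      simpa using this
    rwa [this]
  -- exchange argument
  have hK1 : ∀ b ∈ S, ∀ b' ∈ S, ∀ x x', b ∩ Q = {x} → b' ∩ Q = {x'} →
      x ≠ x' → ¬ Disjoint b b' := by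
    intro b hb b' hb' x x' hbx hb'x hxx' hdisj
    have hbb' : b ≠ b' := by
      intro h
      apply hxx'
      have hss : ({x} : Finset (Fin v)) = {x'} := by rw [← hbx, h, hb'x]
      simpa using hss
    have hdisjQ : ∀ t ∈ S, ∀ tx, t ∩ Q = {tx} → ∀ q ∈ P.erase p, Disjoint t q := by
      intro t ht tx htx q hq
      rw [Finset.disjoint_left]
      intro a hat haq
      have hqP : q ∈ P := Finset.mem_of_mem_erase hq
      have haQ : a ∈ Q := hQP q hqP haq
      have : a ∈ t ∩ Q := Finset.mem_inter.mpr ⟨hat, haQ⟩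
      rw [htx, Finset.mem_singleton] at this
      subst this
      have htp : a ∈ p := hattach t ht a htx
      have : Disjoint p q := hPPC.2 p hp q hqP (Finset.ne_of_mem_erase hq).symm
      exact Finset.disjoint_left.mp this htp haq
    set P' : Finset (Finset (Fin v)) := insert b (insert b' (P.erase p)) with hP'
    have hbB := (hSB b hb).1
    have hb'B := (hSB b' hb').1
    have hbP := (hSB b hb).2.1
    have hb'P := (hSB b' hb').2.1
    have hPPC' : IsPPC B P' := by
      constructor
      · intro t ht
        rw [hP'] at ht
        rcases Finset.mem_insert.mp ht with h | h
        · exact h ▸ hbB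
        rcases Finset.mem_insert.mp h with h | h
        · exact h ▸ hb'B
        · exact hPPC.1 (Finset.mem_of_mem_erase h)
      · intro t1 h1 t2 h2 hne
        have hmem : ∀ t ∈ P', t = b ∨ t = b' ∨ t ∈ P.erase p := by
          intro t ht
          rw [hP', Finset.mem_insert, Finset.mem_insert] at ht
          exact ht
        rcases hmem t1 h1 with h1 | h1 | h1 <;> rcases hmem t2 h2 with h2 | h2 | h2
        · exact absurd (h1.trans h2.symm) hne
        · rw [h1, h2]; exact hdisj
        · rw [h1]; exact hdisjQ b hb x hbx t2 h2
        · rw [h1, h2]; exact hdisj.symm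
        · exact absurd (h1.trans h2.symm) hne
        · rw [h1]; exact hdisjQ b' hb' x' hb'x t2 h2
        · rw [h2]; exact (hdisjQ b hb x hbx t1 h1).symm
        · rw [h2]; exact (hdisjQ b' hb' x' hb'x t1 h1).symm
        · exact hPPC.2 t1 (Finset.mem_of_mem_erase h1) t2 (Finset.mem_of_mem_erase h2) hne
    have hcard' : P'.card = P.card + 1 := by
      have hb'e : b' ∉ P.erase p := fun h => hb'P (Finset.mem_of_mem_erase h)
      have hbe : b ∉ insert b' (P.erase p) := by
        intro h
        rcases Finset.mem_insert.mp h with h | h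
        · exact hbb' h
        · exact hbP (Finset.mem_of_mem_erase h)
      have hPpos : 1 ≤ P.card := Finset.card_pos.mpr ⟨p, hp⟩
      rw [hP', Finset.card_insert_of_notMem hbe, Finset.card_insert_of_notMem hb'e,
        Finset.card_erase_of_mem hp]
      omega
    have := hmax P' hPPC'
    omega
  by_cases hall : ∀ b ∈ S, ∀ b' ∈ S, b ∩ Q = b' ∩ Q
  · -- all blocks attach to the same point
    rcases S.eq_empty_or_nonempty with hS | ⟨b0, hb0⟩
    · simp [hS]
    obtain ⟨-, -, x, hxp, hb0x⟩ := hSB b0 hb0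
    have hfibs : ∀ b ∈ S, b ∩ Q = {x} := by
      intro b hb; rw [hall b hb b0 hb0, hb0x]
    refine le_trans ?_ (le_max_right _ _)
    rw [Nat.le_div_iff_mul_le (by omega : 0 < k - 1)]
    set T : Finset (Fin v) := S.biUnion (fun b => b \ Q) with hT
    have hTd : ∀ b ∈ S, ∀ b' ∈ S, b ≠ b' → Disjoint (b \ Q) (b' \ Q) := by
      intro b hb b' hb' hne
      rw [Finset.disjoint_left]
      intro z hz hz'
      have hzb := Finset.mem_sdiff.mp hz
      have hzb' := Finset.mem_sdiff.mp hz'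
      have hxb : x ∈ b := by
        have : x ∈ b ∩ Q := by rw [hfibs b hb]; simp
        exact (Finset.mem_inter.mp this).1
      have hxb' : x ∈ b' := by
        have : x ∈ b' ∩ Q := by rw [hfibs b' hb']; simp
        exact (Finset.mem_inter.mp this).1
      have hxQ : x ∈ Q := by
        have : x ∈ b ∩ Q := by rw [hfibs b hb]; simp
        exact (Finset.mem_inter.mp this).2
      have hzx : z ≠ x := fun h => hzb.2 (h ▸ hxQ)
      have h2le : 1 < (b ∩ b').card := by
        apply Finset.one_lt_card.mpr
        exact ⟨x, Finset.mem_inter.mpr ⟨hxb, hxb'⟩, z,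
          Finset.mem_inter.mpr ⟨hzb.1, hzb'.1⟩, fun h => hzx h.symm⟩
      have := hpack.2 b (hSB b hb).1 b' (hSB b' hb').1 hne
      omega
    have hTcard : T.card = S.card * (k - 1) := by
      rw [hT, Finset.card_biUnion hTd]
      rw [Finset.sum_congr rfl (fun b hb => ?_), Finset.sum_const, smul_eq_mul]
      have hbk : b.card = k := hpack.1 b (hSB b hb).1
      have h1 : (b ∩ Q).card = 1 := by rw [hfibs b hb]; simp
      have := Finset.card_sdiff_add_card_inter b Q
      omega
    have hTQ : T ⊆ Finset.univ \ Q := by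
      intro z hz
      obtain ⟨b, hb, hzb⟩ := Finset.mem_biUnion.mp hz
      exact Finset.mem_sdiff.mpr ⟨Finset.mem_univ z, (Finset.mem_sdiff.mp hzb).2⟩
    have : T.card ≤ v - Q.card := by
      have h1 : (Finset.univ \ Q : Finset (Fin v)).card = v - Q.card := by
        rw [Finset.card_sdiff_of_subset (Finset.subset_univ Q), Finset.card_univ, Fintype.card_fin]
      exact h1 ▸ Finset.card_le_card hTQ
    omega
  · -- two distinct attach points exist
    push_neg at hall
    obtain ⟨b0, hb0, b1, hb1, hb01⟩ := hall
    obtain ⟨-, -, x0, hx0p, hb0x⟩ := hSB b0 hb0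
    obtain ⟨-, -, x1, hx1p, hb1x⟩ := hSB b1 hb1
    have hx01 : x0 ≠ x1 := by
      intro h; apply hb01; rw [hb0x, hb1x, h]
    refine le_trans ?_ (le_max_left _ _)
    have hsub : S ⊆ p.biUnion (fun x => S.filter (fun b => b ∩ Q = {x})) := by
      intro b hb
      obtain ⟨-, -, x, hxp, hbx⟩ := hSB b hb
      exact Finset.mem_biUnion.mpr ⟨x, hxp, Finset.mem_filter.mpr ⟨hb, hbx⟩⟩
    have hfiber : ∀ x ∈ p, (S.filter (fun b => b ∩ Q = {x})).card ≤ k - 1 := by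
      intro x hxp
      by_cases hx : x = x0
      · subst hx
        apply fiber_le hk hpack Q b1 (hSB b1 hb1).1 x1 hb1x x hx01
        · exact fun b hb => (hSB b (Finset.mem_filter.mp hb).1).1
        · exact fun b hb => (Finset.mem_filter.mp hb).2
        · intro b hb
          exact hK1 b (Finset.mem_filter.mp hb).1 b1 hb1 x x1
            (Finset.mem_filter.mp hb).2 hb1x hx01
      · apply fiber_le hk hpack Q b0 (hSB b0 hb0).1 x0 hb0x x hx
        · exact fun b hb => (hSB b (Finset.mem_filter.mp hb).1).1
        · exact fun b hb => (Finset.mem_filter.mp hb).2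
        · intro b hb
          exact hK1 b (Finset.mem_filter.mp hb).1 b0 hb0 x x0
            (Finset.mem_filter.mp hb).2 hb0x hx
    calc S.card ≤ (p.biUnion (fun x => S.filter (fun b => b ∩ Q = {x}))).card :=
          Finset.card_le_card hsub
      _ ≤ ∑ x ∈ p, (S.filter (fun b => b ∩ Q = {x})).card := Finset.card_biUnion_le
      _ ≤ ∑ x ∈ p, (k - 1) := Finset.sum_le_sum hfiber
      _ = p.card * (k - 1) := by rw [Finset.sum_const, smul_eq_mul]
      _ = k * (k - 1) := by rw [hpack.1 p (hPPC.1 hp)]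

lemma main_nat {v k ρ : ℕ} (hk : 2 ≤ k) {B : Finset (Finset (Fin v))}
    (hpack : IsPacking v k B) (hex : ∃ P, IsPPC B P ∧ P.card = ρ)
    (hmax : ∀ P', IsPPC B P' → P'.card ≤ ρ) :
    B.card + ρ * Nat.choose k 2 ≤
      ρ + Nat.choose (k * ρ) 2 + ρ * max (k * (k - 1)) ((v - k * ρ) / (k - 1)) := by
  classical
  obtain ⟨P, hPPC, hPcard⟩ := hex
  set Q : Finset (Fin v) := P.biUnion id with hQdef
  have hQP : ∀ q ∈ P, q ⊆ Q := by
    intro q hq a ha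
    exact Finset.mem_biUnion.mpr ⟨q, hq, ha⟩
  have hQcard : Q.card = k * ρ := by
    rw [hQdef, Finset.card_biUnion (t := id) hPPC.2]
    calc ∑ q ∈ P, (id q).card = ∑ q ∈ P, k :=
          Finset.sum_congr rfl (fun q hq => hpack.1 q (hPPC.1 hq))
      _ = P.card * k := by rw [Finset.sum_const, smul_eq_mul]
      _ = k * ρ := by rw [hPcard, mul_comm]
  set B2 : Finset (Finset (Fin v)) := (B \ P).filter (fun b => 2 ≤ (b ∩ Q).card) with hB2def
  set B3 : Finset (Finset (Fin v)) := (B \ P).filter (fun b => ¬ 2 ≤ (b ∩ Q).card) with hB3def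
  have hsplit : B2.card + B3.card = (B \ P).card :=
    Finset.card_filter_add_card_filter_not _
  have hBP : (B \ P).card + P.card = B.card :=
    Finset.card_sdiff_add_card_eq_card hPPC.1
  -- bound on B2
  have hB2 : B2.card + ρ * Nat.choose k 2 ≤ Nat.choose (k * ρ) 2 := by
    set W : Finset (Finset (Fin v)) := P.biUnion (fun q => Finset.powersetCard 2 q) with hW
    have hWsub : W ⊆ Q.powersetCard 2 := by
      intro s hs
      obtain ⟨q, hq, hsq⟩ := Finset.mem_biUnion.mp hs
      rw [Finset.mem_powersetCard] at hsq ⊢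
      exact ⟨hsq.1.trans (hQP q hq), hsq.2⟩
    have hWcard : W.card = ρ * Nat.choose k 2 := by
      rw [hW, Finset.card_biUnion]
      · calc ∑ q ∈ P, (Finset.powersetCard 2 q).card
            = ∑ q ∈ P, Nat.choose k 2 := by
              refine Finset.sum_congr rfl (fun q hq => ?_)
              rw [Finset.card_powersetCard, hpack.1 q (hPPC.1 hq)]
          _ = ρ * Nat.choose k 2 := by rw [Finset.sum_const, smul_eq_mul, hPcard]
      · intro q hq q' hq' hne
        rw [Function.onFun, Finset.disjoint_left]
        intro s hs hs'
        rw [Finset.mem_powersetCard] at hs hs'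
        have hdisj := hPPC.2 q hq q' hq' hne
        have : s = ∅ := by
          rw [← Finset.subset_empty]
          intro a ha
          exact absurd (Finset.disjoint_left.mp hdisj (hs.1 ha) (hs'.1 ha)) (by simp)
        rw [this] at hs
        simp at hs
    have hpc : (Q.powersetCard 2).card = Nat.choose (k * ρ) 2 := by
      rw [Finset.card_powersetCard, hQcard]
    have hCross : ((Q.powersetCard 2) \ W).card + W.card = Nat.choose (k * ρ) 2 := by
      rw [Finset.card_sdiff_add_card_eq_card hWsub, hpc]
    have hB2C : B2.card ≤ ((Q.powersetCard 2) \ W).card := by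
      have hch : ∀ b ∈ B2, ∃ t, t ⊆ b ∩ Q ∧ t.card = 2 := by
        intro b hb
        exact Finset.exists_subset_card_eq (Finset.mem_filter.mp hb).2
      set f : Finset (Fin v) → Finset (Fin v) :=
        fun b => if h : b ∈ B2 then (hch b h).choose else ∅ with hf
      have hfs : ∀ b ∈ B2, f b ⊆ b ∩ Q ∧ (f b).card = 2 := by
        intro b hb
        simp only [hf, dif_pos hb]
        exact (hch b hb).choose_spec
      apply Finset.card_le_card_of_injOn f
      · intro b hb
        have hbB : b ∈ B := (Finset.mem_sdiff.mp (Finset.mem_filter.mp hb).1).1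
        have hbP : b ∉ P := (Finset.mem_sdiff.mp (Finset.mem_filter.mp hb).1).2
        refine Finset.mem_sdiff.mpr ⟨?_, ?_⟩
        · rw [Finset.mem_powersetCard]
          exact ⟨(hfs b hb).1.trans (Finset.inter_subset_right), (hfs b hb).2⟩
        · intro hmem
          obtain ⟨q, hq, hsq⟩ := Finset.mem_biUnion.mp hmem
          rw [Finset.mem_powersetCard] at hsq
          have hsub2 : f b ⊆ b ∩ q :=
            Finset.subset_inter ((hfs b hb).1.trans Finset.inter_subset_left) hsq.1
          have : 2 ≤ (b ∩ q).card := (hfs b hb).2 ▸ Finset.card_le_card hsub2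
          have hne : b ≠ q := fun h => hbP (h ▸ hq)
          have := hpack.2 b hbB q (hPPC.1 hq) hne
          omega
      · intro b hb b' hb' hbb'
        simp only [Finset.mem_coe] at hb hb'
        by_contra hne
        have hbB : b ∈ B := (Finset.mem_sdiff.mp (Finset.mem_filter.mp hb).1).1
        have hb'B : b' ∈ B := (Finset.mem_sdiff.mp (Finset.mem_filter.mp hb').1).1
        have hsub2 : f b ⊆ b ∩ b' := by
          refine Finset.subset_inter ((hfs b hb).1.trans Finset.inter_subset_left) ?_
          rw [hbb']
          exact (hfs b' hb').1.trans Finset.inter_subset_left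
        have : 2 ≤ (b ∩ b').card := (hfs b hb).2 ▸ Finset.card_le_card hsub2
        have := hpack.2 b hbB b' hb'B hne
        omega
    omega
  -- every block outside P meets Q
  have hB3card1 : ∀ b ∈ B3, (b ∩ Q).card = 1 := by
    intro b hb
    have hble : (b ∩ Q).card ≤ 1 := by
      have := (Finset.mem_filter.mp hb).2
      omega
    have hbB : b ∈ B := (Finset.mem_sdiff.mp (Finset.mem_filter.mp hb).1).1
    have hbP : b ∉ P := (Finset.mem_sdiff.mp (Finset.mem_filter.mp hb).1).2
    rcases Nat.lt_or_ge 0 ((b ∩ Q).card) with h | h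
    · omega
    · exfalso
      have hbQ : b ∩ Q = ∅ := Finset.card_eq_zero.mp (by omega)
      have hPPC' : IsPPC B (insert b P) := by
        constructor
        · intro t ht
          rcases Finset.mem_insert.mp ht with h | h
          · exact h ▸ hbB
          · exact hPPC.1 h
        · intro t1 h1 t2 h2 hne
          have hbq : ∀ q ∈ P, Disjoint b q := by
            intro q hq
            rw [Finset.disjoint_left]
            intro a hab haq
            have : a ∈ b ∩ Q := Finset.mem_inter.mpr ⟨hab, hQP q hq haq⟩
            rw [hbQ] at this
            simp at this
          rcases Finset.mem_insert.mp h1 with h1 | h1 <;>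
            rcases Finset.mem_insert.mp h2 with h2 | h2
          · exact absurd (h1.trans h2.symm) hne
          · rw [h1]; exact hbq t2 h2
          · rw [h2]; exact (hbq t1 h1).symm
          · exact hPPC.2 t1 h1 t2 h2 hne
      have := hmax _ hPPC'
      rw [Finset.card_insert_of_notMem hbP, hPcard] at this
      omega
  -- bound on B3
  have hB3 : B3.card ≤ ρ * max (k * (k - 1)) ((v - k * ρ) / (k - 1)) := by
    have hsub : B3 ⊆ P.biUnion (fun p => B3.filter (fun b => b ∩ Q ⊆ p)) := by
      intro b hb
      obtain ⟨x, hx⟩ := Finset.card_eq_one.mp (hB3card1 b hb)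
      have hxQ : x ∈ Q := by
        have : x ∈ b ∩ Q := by rw [hx]; simp
        exact (Finset.mem_inter.mp this).2
      obtain ⟨p, hp, hxp⟩ := Finset.mem_biUnion.mp hxQ
      refine Finset.mem_biUnion.mpr ⟨p, hp, Finset.mem_filter.mpr ⟨hb, ?_⟩⟩
      rw [hx]
      exact Finset.singleton_subset_iff.mpr hxp
    have hmax' : ∀ P', IsPPC B P' → P'.card ≤ P.card := by
      intro P' h; rw [hPcard]; exact hmax P' h
    have hfib : ∀ p ∈ P,
        (B3.filter (fun b => b ∩ Q ⊆ p)).card ≤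
          max (k * (k - 1)) ((v - k * ρ) / (k - 1)) := by
      intro p hp
      have := block_star_bound hk hpack hPPC hmax' hp Q hQP
        (B3.filter (fun b => b ∩ Q ⊆ p)) ?_
      · rwa [hQcard] at this
      · intro b hb
        have hb3 : b ∈ B3 := (Finset.mem_filter.mp hb).1
        have hbB : b ∈ B := (Finset.mem_sdiff.mp (Finset.mem_filter.mp hb3).1).1
        have hbP : b ∉ P := (Finset.mem_sdiff.mp (Finset.mem_filter.mp hb3).1).2
        obtain ⟨x, hx⟩ := Finset.card_eq_one.mp (hB3card1 b hb3)
        refine ⟨hbB, hbP, x, ?_, hx⟩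
        have : x ∈ b ∩ Q := by rw [hx]; simp
        exact (Finset.mem_filter.mp hb).2 this
    calc B3.card ≤ (P.biUnion (fun p => B3.filter (fun b => b ∩ Q ⊆ p))).card :=
          Finset.card_le_card hsub
      _ ≤ ∑ p ∈ P, (B3.filter (fun b => b ∩ Q ⊆ p)).card := Finset.card_biUnion_le
      _ ≤ ∑ _p ∈ P, max (k * (k - 1)) ((v - k * ρ) / (k - 1)) :=
          Finset.sum_le_sum hfib
      _ = ρ * max (k * (k - 1)) ((v - k * ρ) / (k - 1)) := by
          rw [Finset.sum_const, smul_eq_mul, hPcard]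
  have hρP : P.card = ρ := hPcard
  linarith [hB2, hB3, hsplit, hBP]

theorem stmt17 (k ρ v : ℕ) (hk : 2 ≤ k) (hρ : 1 ≤ ρ) (hv : k * ρ ≤ v) :
    (beta ρ v k : ℚ) ≤ (ρ : ℚ) * ((k : ℚ) ^ 2 * ((ρ : ℚ) - 1) / 2 + 1 +
      max ((k * (k - 1) : ℕ) : ℚ) (((v - k * ρ) / (k - 1) : ℕ) : ℚ)) := by
  have hsub := choose_sub_le hk hρ
  set M := max (k * (k - 1)) ((v - k * ρ) / (k - 1)) with hM
  have hub : beta ρ v k ≤ ρ + (Nat.choose (k * ρ) 2 - ρ * Nat.choose k 2) + ρ * M := by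
    unfold beta
    apply csSup_le'
    rintro n ⟨B, hpack, hmps, rfl⟩
    have hmain := main_nat hk hpack hmps.1 hmps.2
    rw [← hM] at hmain
    set a := ρ * Nat.choose k 2 with ha
    set b := Nat.choose (k * ρ) 2 with hb
    set c := ρ * M with hc
    omega
  have hcast : (beta ρ v k : ℚ) ≤
      ((ρ + (Nat.choose (k * ρ) 2 - ρ * Nat.choose k 2) + ρ * M : ℕ) : ℚ) :=
    Nat.cast_le.mpr hub
  refine hcast.trans (le_of_eq ?_)
  rw [Nat.cast_add, Nat.cast_add, Nat.cast_sub hsub, Nat.cast_mul, Nat.cast_mul,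
    Nat.cast_choose_two, Nat.cast_choose_two, hM, Nat.cast_max]
  push_cast
  ring
end

section
/- For every k ≥ 2, if v ≡ 1 (mod k−1) and v ≥ k(k−1)² + k, then β(1,v,k) = (v−1)/(k−1). -/
lemma inter_eq_singleton_of {α : Type*} [DecidableEq α] {b₁ b₂ : Finset α} {x : α}
    (h : (b₁ ∩ b₂).card ≤ 1) (hx : x ∈ b₁ ∩ b₂) : b₁ ∩ b₂ = {x} := by
  apply Finset.eq_singleton_iff_unique_mem.mpr
  exact ⟨hx, fun y hy => Finset.card_le_one.mp h y hy x hx⟩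

lemma blocks_through {v n : ℕ} {B : Finset (Finset (Fin v))}
    (hP : IsPacking v (n+1) B) (x : Fin v) :
    (B.filter (fun b => x ∈ b)).card * n ≤ v - 1 := by
  classical
  set S := B.filter (fun b => x ∈ b) with hS
  have hdisj : ∀ b₁ ∈ S, ∀ b₂ ∈ S, b₁ ≠ b₂ → Disjoint (b₁.erase x) (b₂.erase x) := by
    intro b₁ h₁ b₂ h₂ hne
    simp only [hS, Finset.mem_filter] at h₁ h₂
    have hint := hP.2 b₁ h₁.1 b₂ h₂.1 hne
    rw [Finset.disjoint_left]
    intro a ha ha'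
    have hax : a ≠ x := Finset.ne_of_mem_erase ha
    have hmem : a ∈ b₁ ∩ b₂ :=
      Finset.mem_inter.mpr ⟨Finset.mem_of_mem_erase ha, Finset.mem_of_mem_erase ha'⟩
    have heq := inter_eq_singleton_of hint (Finset.mem_inter.mpr ⟨h₁.2, h₂.2⟩)
    rw [heq] at hmem
    exact hax (Finset.mem_singleton.mp hmem)
  have hcard : (S.biUnion (fun b => b.erase x)).card = S.card * n := by
    rw [Finset.card_biUnion hdisj]
    rw [Finset.sum_congr rfl (fun b hb => ?_), Finset.sum_const, smul_eq_mul]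
    simp only [hS, Finset.mem_filter] at hb
    rw [Finset.card_erase_of_mem hb.2, hP.1 b hb.1]
    omega
  have hsub : S.biUnion (fun b => b.erase x) ⊆ Finset.univ.erase x := by
    intro a ha
    rw [Finset.mem_biUnion] at ha
    obtain ⟨b, _, hab⟩ := ha
    exact Finset.mem_erase.mpr ⟨Finset.ne_of_mem_erase hab, Finset.mem_univ a⟩
  have := Finset.card_le_card hsub
  rw [hcard, Finset.card_erase_of_mem (Finset.mem_univ x), Finset.card_univ,
    Fintype.card_fin] at this
  exact this

lemma all_through {v n : ℕ} {B : Finset (Finset (Fin v))}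
    (hP : IsPacking v (n+1) B)
    (hnd : ∀ b₁ ∈ B, ∀ b₂ ∈ B, b₁ ≠ b₂ → ¬Disjoint b₁ b₂)
    {x : Fin v} (hx : (n+1) + 1 ≤ (B.filter (fun b => x ∈ b)).card) :
    ∀ b ∈ B, x ∈ b := by
  classical
  intro b hb
  by_contra hxb
  set S := B.filter (fun b => x ∈ b) with hS
  have hchoose : ∀ c ∈ S, (c ∩ b).Nonempty := by
    intro c hc
    simp only [hS, Finset.mem_filter] at hc
    have hne : c ≠ b := fun h => hxb (h ▸ hc.2)
    have := hnd c hc.1 b hb hne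
    rw [Finset.not_disjoint_iff] at this
    obtain ⟨p, hp1, hp2⟩ := this
    exact ⟨p, Finset.mem_inter.mpr ⟨hp1, hp2⟩⟩
  set f : Finset (Fin v) → Fin v := fun c =>
    if h : (c ∩ b).Nonempty then h.choose else x with hf
  have hmaps : ∀ c ∈ S, f c ∈ b := by
    intro c hc
    have h := hchoose c hc
    simp only [hf, dif_pos h]
    exact (Finset.mem_inter.mp h.choose_spec).2
  have hinj : Set.InjOn f S := by
    intro c hc c' hc' hfeq
    by_contra hne
    have h := hchoose c hc
    have h' := hchoose c' hc'
    have hpc : f c ∈ c ∩ b := by simp only [hf, dif_pos h]; exact h.choose_spec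
    have hpc' : f c' ∈ c' ∩ b := by simp only [hf, dif_pos h']; exact h'.choose_spec
    simp only [hS, Finset.mem_coe, Finset.mem_filter] at hc hc'
    have hint := hP.2 c hc.1 c' hc'.1 hne
    have heq := inter_eq_singleton_of hint (Finset.mem_inter.mpr ⟨hc.2, hc'.2⟩)
    have : f c ∈ c ∩ c' := Finset.mem_inter.mpr
      ⟨(Finset.mem_inter.mp hpc).1, hfeq ▸ (Finset.mem_inter.mp hpc').1⟩
    rw [heq, Finset.mem_singleton] at this
    exact hxb (this ▸ (Finset.mem_inter.mp hpc).2)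
  have hle : S.card ≤ b.card := Finset.card_le_card_of_injOn f hmaps hinj
  rw [hP.1 b hb] at hle
  omega

lemma upper {v n : ℕ} (hn1 : 1 ≤ n) {m : ℕ} (hvm : v = n * m + 1) (hm : (n+1)*n + 1 ≤ m)
    {B : Finset (Finset (Fin v))} (hP : IsPacking v (n+1) B) (hM : MaxPPCSize B 1) :
    B.card ≤ m := by
  classical
  have hnd : ∀ b₁ ∈ B, ∀ b₂ ∈ B, b₁ ≠ b₂ → ¬Disjoint b₁ b₂ := by
    intro b₁ h₁ b₂ h₂ hne hd
    have hPPC : IsPPC B {b₁, b₂} := by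
      constructor
      · intro c hc
        rcases Finset.mem_insert.mp hc with h | h
        · exact h ▸ h₁
        · exact (Finset.mem_singleton.mp h) ▸ h₂
      · intro c₁ hc₁ c₂ hc₂ hcne
        simp only [Finset.mem_insert, Finset.mem_singleton] at hc₁ hc₂
        rcases hc₁ with rfl | rfl <;> rcases hc₂ with rfl | rfl
        · exact absurd rfl hcne
        · exact hd
        · exact hd.symm
        · exact absurd rfl hcne
    have := hM.2 _ hPPC
    rw [Finset.card_pair hne] at this
    omega
  by_cases hcase : ∃ x : Fin v, (n+1) + 1 ≤ (B.filter (fun b => x ∈ b)).card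
  · obtain ⟨x, hx⟩ := hcase
    have hall := all_through hP hnd hx
    have hBeq : B = B.filter (fun b => x ∈ b) := by
      apply Finset.ext
      intro b
      simp only [Finset.mem_filter]
      exact ⟨fun h => ⟨h, hall b h⟩, fun h => h.1⟩
    have := blocks_through hP x
    rw [← hBeq] at this
    have hv1 : v - 1 = m * n := by rw [hvm, Nat.add_sub_cancel, Nat.mul_comm]
    rw [hv1] at this
    exact Nat.le_of_mul_le_mul_right this (by omega)
  · push_neg at hcase
    obtain ⟨P, hPPC, hPcard⟩ := hM.1
    have hPne : P.Nonempty := Finset.card_pos.mp (by omega)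
    obtain ⟨b0, hb0P⟩ := hPne
    have hb0 : b0 ∈ B := hPPC.1 hb0P
    have hsub : B.erase b0 ⊆ b0.biUnion (fun x => (B.filter (fun b => x ∈ b)).erase b0) := by
      intro b hb
      have hbB : b ∈ B := Finset.mem_of_mem_erase hb
      have hbne : b ≠ b0 := Finset.ne_of_mem_erase hb
      have := hnd b hbB b0 hb0 hbne
      rw [Finset.not_disjoint_iff] at this
      obtain ⟨p, hp1, hp2⟩ := this
      rw [Finset.mem_biUnion]
      exact ⟨p, hp2, Finset.mem_erase.mpr ⟨hbne, Finset.mem_filter.mpr ⟨hbB, hp1⟩⟩⟩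
    have hcount : (B.erase b0).card ≤ (n+1) * n := by
      calc (B.erase b0).card
          ≤ (b0.biUnion (fun x => (B.filter (fun b => x ∈ b)).erase b0)).card :=
            Finset.card_le_card hsub
        _ ≤ ∑ x ∈ b0, ((B.filter (fun b => x ∈ b)).erase b0).card :=
            Finset.card_biUnion_le
        _ ≤ ∑ x ∈ b0, n := by
            apply Finset.sum_le_sum
            intro x hxb0
            have hmem : b0 ∈ B.filter (fun b => x ∈ b) := Finset.mem_filter.mpr ⟨hb0, hxb0⟩
            rw [Finset.card_erase_of_mem hmem]
            have := hcase x
            omega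
        _ = (n+1) * n := by rw [Finset.sum_const, smul_eq_mul, hP.1 b0 hb0]
    have : B.card = (B.erase b0).card + 1 := (Finset.card_erase_add_one hb0).symm
    omega

lemma construct (v n m : ℕ) (hn : 1 ≤ n) (hvm : v = n * m + 1) (hm : 1 ≤ m) :
    ∃ B : Finset (Finset (Fin v)), IsPacking v (n+1) B ∧ MaxPPCSize B 1 ∧ B.card = m := by
  classical
  have hv0 : 0 < v := by omega
  set z : Fin v := ⟨0, hv0⟩ with hz
  set F : ℕ → Finset (Fin v) := fun i =>
    insert z ((Finset.Ico (n*i+1) (n*i+n+1)).image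
      (fun a => (⟨a % v, Nat.mod_lt _ hv0⟩ : Fin v))) with hF
  have hbound : ∀ i < m, ∀ a, n*i+1 ≤ a → a < n*i+n+1 → a < v := by
    intro i hi a h1 h2
    have : n*i + n ≤ n*(m-1) + n := by
      have : n*i ≤ n*(m-1) := Nat.mul_le_mul_left n (by omega)
      omega
    have h3 : n*(m-1) + n = n*m := by
      have : m - 1 + 1 = m := by omega
      calc n*(m-1) + n = n*((m-1)+1) := by ring
        _ = n*m := by rw [this]
    omega
  have hmem : ∀ i < m, ∀ x : Fin v, x ∈ F i ↔ x = z ∨ (n*i+1 ≤ x.val ∧ x.val < n*i+n+1) := by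
    intro i hi x
    simp only [hF, Finset.mem_insert, Finset.mem_image, Finset.mem_Ico]
    constructor
    · rintro (h | ⟨a, ⟨h1, h2⟩, rfl⟩)
      · exact Or.inl h
      · right
        have hav : a < v := hbound i hi a h1 h2
        simp [Nat.mod_eq_of_lt hav]
        omega
    · rintro (h | ⟨h1, h2⟩)
      · exact Or.inl h
      · right
        refine ⟨x.val, ⟨h1, h2⟩, ?_⟩
        apply Fin.ext
        simp [Nat.mod_eq_of_lt x.isLt]
  have hzmem : ∀ i, z ∈ F i := fun i => Finset.mem_insert_self _ _
  have hcard : ∀ i < m, (F i).card = n + 1 := by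
    intro i hi
    rw [hF]
    rw [Finset.card_insert_of_notMem, Finset.card_image_of_injOn, Nat.card_Ico]
    · omega
    · intro a ha a' ha' heq
      rw [Finset.mem_coe, Finset.mem_Ico] at ha ha'
      have hav : a < v := hbound i hi a ha.1 ha.2
      have hav' : a' < v := hbound i hi a' ha'.1 ha'.2
      have := congrArg Fin.val heq
      simpa [Nat.mod_eq_of_lt hav, Nat.mod_eq_of_lt hav'] using this
    · intro hcon
      rw [Finset.mem_image] at hcon
      obtain ⟨a, ha, heq⟩ := hcon
      rw [Finset.mem_Ico] at ha
      have hav : a < v := hbound i hi a ha.1 ha.2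
      have := congrArg Fin.val heq
      simp [Nat.mod_eq_of_lt hav, hz] at this
      omega
  have hinter : ∀ i < m, ∀ i' < m, i ≠ i' → ∀ x ∈ F i ∩ F i', x = z := by
    intro i hi i' hi' hne x hx
    rw [Finset.mem_inter] at hx
    rw [hmem i hi x] at hx
    rw [hmem i' hi' x] at hx
    rcases hx.1 with h | h1
    · exact h
    rcases hx.2 with h | h2
    · exact h
    exfalso
    rcases Nat.lt_or_ge i i' with hlt | hge
    · have : n*(i+1) ≤ n*i' := Nat.mul_le_mul_left n hlt
      have h3 : n*(i+1) = n*i + n := by ring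
      omega
    · have hlt' : i' < i := by omega
      have : n*(i'+1) ≤ n*i := Nat.mul_le_mul_left n hlt'
      have h3 : n*(i'+1) = n*i' + n := by ring
      omega
  have hFne : ∀ i < m, ∀ i' < m, i ≠ i' → F i ≠ F i' := by
    intro i hi i' hi' hne heq
    have h1 : (F i ∩ F i').card ≤ 1 := by
      apply Finset.card_le_one.mpr
      intro a ha b hb
      rw [hinter i hi i' hi' hne a ha, hinter i hi i' hi' hne b hb]
    rw [heq, Finset.inter_self, hcard i' hi'] at h1
    omega
  refine ⟨(Finset.range m).image F, ⟨?_, ?_⟩, ⟨⟨{F 0}, ⟨?_, ?_⟩, Finset.card_singleton _⟩, ?_⟩, ?_⟩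
  · intro b hb
    rw [Finset.mem_image] at hb
    obtain ⟨i, hi, rfl⟩ := hb
    exact hcard i (Finset.mem_range.mp hi)
  · intro b₁ h₁ b₂ h₂ hne
    rw [Finset.mem_image] at h₁ h₂
    obtain ⟨i, hi, rfl⟩ := h₁
    obtain ⟨i', hi', rfl⟩ := h₂
    rw [Finset.mem_range] at hi hi'
    have hii : i ≠ i' := fun h => hne (h ▸ rfl)
    apply Finset.card_le_one.mpr
    intro a ha b hb
    rw [hinter i hi i' hi' hii a ha, hinter i hi i' hi' hii b hb]
  · intro b hb
    rw [Finset.mem_singleton] at hb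
    subst hb
    exact Finset.mem_image_of_mem F (Finset.mem_range.mpr hm)
  · intro b₁ h₁ b₂ h₂ hne
    rw [Finset.mem_singleton] at h₁ h₂
    exact absurd (h₁.trans h₂.symm) hne
  · intro P hPPC
    apply Finset.card_le_one.mpr
    intro a ha b hb
    by_contra hne
    have hd := hPPC.2 a ha b hb hne
    have haB := hPPC.1 ha
    have hbB := hPPC.1 hb
    rw [Finset.mem_image] at haB hbB
    obtain ⟨i, _, rfl⟩ := haB
    obtain ⟨i', _, rfl⟩ := hbB
    exact Finset.disjoint_left.mp hd (hzmem i) (hzmem i')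
  · rw [Finset.card_image_of_injOn, Finset.card_range]
    intro i hi i' hi' heq
    rw [Finset.mem_coe, Finset.mem_range] at hi hi'
    by_contra hne
    exact hFne i hi i' hi' hne heq

theorem stmt18 (k v : ℕ) (hk : 2 ≤ k) (hmod : v % (k - 1) = 1 % (k - 1))
    (hv : k * (k - 1) ^ 2 + k ≤ v) :
    beta 1 v k = (v - 1) / (k - 1) := by
  classical
  obtain ⟨n, rfl⟩ : ∃ n, k = n + 1 := ⟨k - 1, by omega⟩
  have hn : 1 ≤ n := by omega
  simp only [Nat.add_sub_cancel] at hmod hv ⊢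
  have hv1 : 1 ≤ v := by nlinarith
  have hdvd : n ∣ v - 1 := (Nat.modEq_iff_dvd' hv1).mp (Nat.ModEq.symm hmod)
  set m := (v - 1) / n with hmdef
  have hnm : n * m = v - 1 := Nat.mul_div_cancel' hdvd
  have hvm : v = n * m + 1 := by omega
  have hm : (n+1)*n + 1 ≤ m := by
    rw [hmdef]
    rw [Nat.le_div_iff_mul_le (by omega : 0 < n)]
    have hcalc : ((n+1)*n+1)*n + 1 = (n+1)*n^2 + (n+1) := by ring
    omega
  have hm1 : 1 ≤ m := by
    have : 0 ≤ (n+1)*n := Nat.zero_le _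
    omega
  obtain ⟨B, hP, hM, hBc⟩ := construct v n m hn hvm hm1
  have hmemS : m ∈ {b | ∃ B : Finset (Finset (Fin v)),
      IsPacking v (n+1) B ∧ MaxPPCSize B 1 ∧ B.card = b} := ⟨B, hP, hM, hBc⟩
  have hub : ∀ b ∈ {b | ∃ B : Finset (Finset (Fin v)),
      IsPacking v (n+1) B ∧ MaxPPCSize B 1 ∧ B.card = b}, b ≤ m := by
    rintro b ⟨B', hP', hM', rfl⟩
    exact upper hn hvm hm hP' hM'
  rw [beta]
  exact le_antisymm (csSup_le ⟨m, hmemS⟩ hub) (le_csSup ⟨m, hub⟩ hmemS)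
end

section
/- For every k ≥ 2, if v ≡ 2 (mod k−1) and v ≥ k(k−1)² + 2k, then (2v−4)/(k−1) ≤ β(2,v,k) ≤ (2v−4)/(k−1) + k² − 2. -/
open Finset

section Aux

/-- The side bound: blocks meeting `b₁` only. -/
lemma side_bound {v k : ℕ} (hk : 2 ≤ k) (hv : k * (k - 1) ^ 2 + 2 * k ≤ v)
    {B : Finset (Finset (Fin v))} (hB : IsPacking v k B)
    (hmax : ∀ P, IsPPC B P → P.card ≤ 2)
    {b₁ b₂ : Finset (Fin v)} (h1 : b₁ ∈ B) (h2 : b₂ ∈ B)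
    (hdisj : Disjoint b₁ b₂) :
    (B.filter (fun b => b ≠ b₁ ∧ (b ∩ b₁).Nonempty ∧ b ∩ b₂ = ∅)).card
      ≤ (v - 2 * k) / (k - 1) := by
  classical
  haveI : NeZero v := ⟨by nlinarith⟩
  have hd : 0 < k - 1 := by omega
  set A := B.filter (fun b => b ≠ b₁ ∧ (b ∩ b₁).Nonempty ∧ b ∩ b₂ = ∅) with hA
  set xp : Finset (Fin v) → Fin v :=
    (fun a => if h : (a ∩ b₁).Nonempty then (a ∩ b₁).min' h else 0) with hxp
  have hAfacts : ∀ a ∈ A, a ∈ B ∧ a ≠ b₁ ∧ a ∩ b₁ = {xp a} ∧ a ∩ b₂ = ∅ := by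
    intro a ha
    simp only [hA, Finset.mem_filter] at ha
    obtain ⟨haB, hab1, han, hab2⟩ := ha
    refine ⟨haB, hab1, ?_, hab2⟩
    have h1' := hB.2 a haB b₁ h1 hab1
    have h2' := Finset.card_pos.2 han
    have hcard1 : (a ∩ b₁).card = 1 := by omega
    have hmem : xp a ∈ a ∩ b₁ := by
      rw [hxp]; dsimp only; rw [dif_pos han]; exact (a ∩ b₁).min'_mem han
    obtain ⟨z, hz⟩ := Finset.card_eq_one.1 hcard1
    rw [hz] at hmem ⊢
    rw [Finset.mem_singleton.1 hmem]
  have hxmem : ∀ a ∈ A, xp a ∈ a ∩ b₁ := by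
    intro a ha
    rw [(hAfacts a ha).2.2.1]; simp
  -- pairwise intersecting
  have hint : ∀ a ∈ A, ∀ a' ∈ A, a ≠ a' → (a ∩ a').Nonempty := by
    intro a ha a' ha' hne
    obtain ⟨haB, -, -, hab2⟩ := hAfacts a ha
    obtain ⟨ha'B, -, -, ha'b2⟩ := hAfacts a' ha'
    by_contra hcon
    rw [Finset.not_nonempty_iff_eq_empty] at hcon
    have hdaa : Disjoint a a' := Finset.disjoint_iff_inter_eq_empty.2 hcon
    have hda2 : Disjoint a b₂ := Finset.disjoint_iff_inter_eq_empty.2 hab2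
    have hda'2 : Disjoint a' b₂ := Finset.disjoint_iff_inter_eq_empty.2 ha'b2
    have hane : a.Nonempty := Finset.card_pos.1 (by rw [hB.1 a haB]; omega)
    have ha'ne : a'.Nonempty := Finset.card_pos.1 (by rw [hB.1 a' ha'B]; omega)
    have hab2' : a ≠ b₂ := by
      rintro rfl; exact hane.ne_empty (by simpa using hab2)
    have ha'b2' : a' ≠ b₂ := by
      rintro rfl; exact ha'ne.ne_empty (by simpa using ha'b2)
    have hP3 : IsPPC B (insert a {a', b₂}) := by
      constructor
      · intro x hx
        simp only [Finset.mem_insert, Finset.mem_singleton] at hx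
        rcases hx with rfl | rfl | rfl <;> assumption
      · intro x hx y hy hxy
        simp only [Finset.mem_insert, Finset.mem_singleton] at hx hy
        rcases hx with rfl | rfl | rfl <;> rcases hy with rfl | rfl | rfl <;>
          first
          | exact absurd rfl hxy
          | assumption
          | exact hdaa.symm
          | exact hda2.symm
          | exact hda'2.symm
    have := hmax _ hP3
    rw [Finset.card_insert_of_notMem (by simp [hne, hab2']),
      Finset.card_insert_of_notMem (by simp [ha'b2']), Finset.card_singleton] at this
    omega
  by_cases hcase : ∀ a ∈ A, ∀ a' ∈ A, xp a = xp a'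
  · -- all through a common point
    rcases A.eq_empty_or_nonempty with hAe | ⟨a₀, ha₀⟩
    · simp [hAe]
    set x := xp a₀ with hx
    have hxall : ∀ a ∈ A, a ∩ b₁ = {x} := by
      intro a ha
      rw [(hAfacts a ha).2.2.1, hx, hcase a ha a₀ ha₀]
    have hxb1 : x ∈ b₁ := Finset.mem_of_mem_inter_right (hxmem a₀ ha₀)
    have hodisj : ∀ a ∈ A, ∀ a' ∈ A, a ≠ a' →
        Disjoint (a.erase x) (a'.erase x) := by
      intro a ha a' ha' hne
      rw [Finset.disjoint_left]
      intro z hz hz'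
      have hza : z ∈ a := Finset.mem_of_mem_erase hz
      have hza' : z ∈ a' := Finset.mem_of_mem_erase hz'
      have hzx : z ≠ x := Finset.ne_of_mem_erase hz
      have hxa : x ∈ a := Finset.mem_of_mem_inter_left (by rw [hxall a ha]; simp)
      have hxa' : x ∈ a' := Finset.mem_of_mem_inter_left (by rw [hxall a' ha']; simp)
      have hsub2 : ({z, x} : Finset (Fin v)) ⊆ a ∩ a' := by
        intro w hw
        simp only [Finset.mem_insert, Finset.mem_singleton] at hw
        rcases hw with rfl | rfl <;> exact Finset.mem_inter.2 ⟨by assumption, by assumption⟩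
      have h2le : 2 ≤ (a ∩ a').card := by
        calc 2 = ({z, x} : Finset (Fin v)).card := by
              rw [Finset.card_insert_of_notMem (by simp [hzx]), Finset.card_singleton]
          _ ≤ (a ∩ a').card := Finset.card_le_card hsub2
      have := hB.2 a (hAfacts a ha).1 a' (hAfacts a' ha').1 hne
      omega
    have hosub : ∀ a ∈ A, a.erase x ⊆ Finset.univ \ (b₁ ∪ b₂) := by
      intro a ha z hz
      have hza : z ∈ a := Finset.mem_of_mem_erase hz
      have hzx : z ≠ x := Finset.ne_of_mem_erase hz
      rw [Finset.mem_sdiff]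
      refine ⟨Finset.mem_univ _, ?_⟩
      rw [Finset.mem_union]
      rintro (hb | hb)
      · have : z ∈ a ∩ b₁ := Finset.mem_inter.2 ⟨hza, hb⟩
        rw [hxall a ha] at this
        exact hzx (Finset.mem_singleton.1 this)
      · have : z ∈ a ∩ b₂ := Finset.mem_inter.2 ⟨hza, hb⟩
        rw [(hAfacts a ha).2.2.2] at this
        simp at this
    have hocard : ∀ a ∈ A, (a.erase x).card = k - 1 := by
      intro a ha
      have hxa : x ∈ a := Finset.mem_of_mem_inter_left (by rw [hxall a ha]; simp)
      rw [Finset.card_erase_of_mem hxa, hB.1 a (hAfacts a ha).1]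
    have hkey : A.card * (k - 1) ≤ v - 2 * k := by
      have hbi := Finset.card_biUnion hodisj
      have hle : (A.biUnion (fun a => a.erase x)).card ≤
          (Finset.univ \ (b₁ ∪ b₂)).card := by
        apply Finset.card_le_card
        intro z hz
        obtain ⟨a, ha, hza⟩ := Finset.mem_biUnion.1 hz
        exact hosub a ha hza
      have hS : (Finset.univ \ (b₁ ∪ b₂) : Finset (Fin v)).card = v - 2 * k := by
        rw [Finset.card_sdiff_of_subset (Finset.subset_univ _), Finset.card_union_of_disjoint hdisj,
          hB.1 b₁ h1, hB.1 b₂ h2]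
        simp [two_mul]
      have hsum : ∑ a ∈ A, (a.erase x).card = A.card * (k - 1) := by
        rw [Finset.sum_congr rfl hocard, Finset.sum_const, smul_eq_mul]
      omega
    exact (Nat.le_div_iff_mul_le hd).2 hkey
  · -- fibers are small
    push_neg at hcase
    obtain ⟨a₀, ha₀, a₁, ha₁, hx01⟩ := hcase
    have hfiber : ∀ y ∈ A.image xp, (A.filter (fun a => xp a = y)).card ≤ k - 1 := by
      intro y hy
      obtain ⟨aw, haw, hawy⟩ := Finset.mem_image.1 hy
      -- choose a'' with xp a'' ≠ y
      obtain ⟨a'', ha'', ha''y⟩ : ∃ a'' ∈ A, xp a'' ≠ y := by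
        by_cases h0 : xp a₀ = y
        · exact ⟨a₁, ha₁, by rw [← h0]; exact fun h => hx01 h.symm⟩
        · exact ⟨a₀, ha₀, h0⟩
      have htar : (a'' \ b₁).card = k - 1 := by
        have hcst : (a'' \ b₁).card + (a'' ∩ b₁).card = a''.card :=
          Finset.card_sdiff_add_card_inter _ _
        rw [(hAfacts a'' ha'').2.2.1, Finset.card_singleton, hB.1 a'' (hAfacts a'' ha'').1]
          at hcst
        omega
      have hmaps : ∀ a ∈ A.filter (fun a => xp a = y),
          (if h : (a ∩ a'').Nonempty then (a ∩ a'').min' h else 0) ∈ a'' \ b₁ := by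
        intro a ha
        simp only [Finset.mem_filter] at ha
        obtain ⟨haA, hay⟩ := ha
        have hane : a ≠ a'' := fun h => ha''y (h ▸ hay)
        have hnn : (a ∩ a'').Nonempty := hint a haA a'' ha'' hane
        rw [dif_pos hnn]
        set z := (a ∩ a'').min' hnn with hz
        have hzmem : z ∈ a ∩ a'' := (a ∩ a'').min'_mem hnn
        rw [Finset.mem_sdiff]
        refine ⟨Finset.mem_of_mem_inter_right hzmem, ?_⟩
        intro hzb1
        have : z ∈ a ∩ b₁ := Finset.mem_inter.2 ⟨Finset.mem_of_mem_inter_left hzmem, hzb1⟩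
        rw [(hAfacts a haA).2.2.1] at this
        have hzy : z = xp a := Finset.mem_singleton.1 this
        have : z ∈ a'' ∩ b₁ :=
          Finset.mem_inter.2 ⟨Finset.mem_of_mem_inter_right hzmem, hzb1⟩
        rw [(hAfacts a'' ha'').2.2.1] at this
        have : z = xp a'' := Finset.mem_singleton.1 this
        exact ha''y (by rw [← this, hzy, hay])
      have hinj : Set.InjOn (fun a => if h : (a ∩ a'').Nonempty then (a ∩ a'').min' h else 0)
          (A.filter (fun a => xp a = y) : Finset (Finset (Fin v))) := by
        intro a ha a' ha' heq
        simp only [Finset.mem_coe, Finset.mem_filter] at ha ha'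
        obtain ⟨haA, hay⟩ := ha
        obtain ⟨ha'A, ha'y⟩ := ha'
        by_contra hne
        have hane : a ≠ a'' := fun h => ha''y (h ▸ hay)
        have ha'ne : a' ≠ a'' := fun h => ha''y (h ▸ ha'y)
        have hnn : (a ∩ a'').Nonempty := hint a haA a'' ha'' hane
        have hnn' : (a' ∩ a'').Nonempty := hint a' ha'A a'' ha'' ha'ne
        dsimp only at heq
        rw [dif_pos hnn, dif_pos hnn'] at heq
        set z := (a ∩ a'').min' hnn with hz
        have hzmem : z ∈ a ∩ a'' := (a ∩ a'').min'_mem hnn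
        have hzmem' : z ∈ a' ∩ a'' := by
          rw [heq]; exact (a' ∩ a'').min'_mem hnn'
        -- y is also common to a and a'
        have hya : y ∈ a := by
          have := hxmem a haA; rw [hay] at this
          exact Finset.mem_of_mem_inter_left this
        have hya' : y ∈ a' := by
          have := hxmem a' ha'A; rw [ha'y] at this
          exact Finset.mem_of_mem_inter_left this
        have hzy : z ≠ y := by
          intro h
          have hz1 : z ∈ a'' ∩ b₁ := by
            refine Finset.mem_inter.2 ⟨Finset.mem_of_mem_inter_right hzmem, ?_⟩
            rw [h, ← hay]
            exact Finset.mem_of_mem_inter_right (hxmem a haA)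
          rw [(hAfacts a'' ha'').2.2.1] at hz1
          exact ha''y (by rw [← Finset.mem_singleton.1 hz1, h])
        have hsub2 : ({z, y} : Finset (Fin v)) ⊆ a ∩ a' := by
          intro w hw
          simp only [Finset.mem_insert, Finset.mem_singleton] at hw
          rcases hw with rfl | rfl
          · exact Finset.mem_inter.2 ⟨Finset.mem_of_mem_inter_left hzmem,
              Finset.mem_of_mem_inter_left hzmem'⟩
          · exact Finset.mem_inter.2 ⟨hya, hya'⟩
        have h2le : 2 ≤ (a ∩ a').card := by
          calc 2 = ({z, y} : Finset (Fin v)).card := by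
                rw [Finset.card_insert_of_notMem (by simp [hzy]), Finset.card_singleton]
            _ ≤ (a ∩ a').card := Finset.card_le_card hsub2
        have := hB.2 a (hAfacts a haA).1 a' (hAfacts a' ha'A).1 hne
        omega
      calc (A.filter (fun a => xp a = y)).card ≤ (a'' \ b₁).card :=
            Finset.card_le_card_of_injOn _ hmaps hinj
        _ = k - 1 := htar
    have himg : (A.image xp).card ≤ k := by
      have : A.image xp ⊆ b₁ := by
        intro y hy
        obtain ⟨a, ha, rfl⟩ := Finset.mem_image.1 hy
        exact Finset.mem_of_mem_inter_right (hxmem a ha)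
      calc (A.image xp).card ≤ b₁.card := Finset.card_le_card this
        _ = k := hB.1 b₁ h1
    have hAle : A.card ≤ (k - 1) * k := by
      calc A.card ≤ (k - 1) * (A.image xp).card :=
            Finset.card_le_mul_card_image A (k - 1) hfiber
        _ ≤ (k - 1) * k := Nat.mul_le_mul_left _ himg
    refine hAle.trans ((Nat.le_div_iff_mul_le hd).2 ?_)
    have : (k - 1) * k * (k - 1) = k * (k - 1) ^ 2 := by ring
    omega

lemma upper_main {v k : ℕ} (hk : 2 ≤ k) (hv : k * (k - 1) ^ 2 + 2 * k ≤ v)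
    {B : Finset (Finset (Fin v))} (hB : IsPacking v k B) (hM : MaxPPCSize B 2) :
    B.card ≤ 2 + k ^ 2 + 2 * ((v - 2 * k) / (k - 1)) := by
  classical
  haveI : NeZero v := ⟨by nlinarith⟩
  obtain ⟨⟨P, hPPC, hP2⟩, hmax⟩ := hM
  obtain ⟨b₁, b₂, hne, rfl⟩ := Finset.card_eq_two.1 hP2
  have h1 : b₁ ∈ B := hPPC.1 (by simp)
  have h2 : b₂ ∈ B := hPPC.1 (by simp)
  have hdisj : Disjoint b₁ b₂ := hPPC.2 b₁ (by simp) b₂ (by simp) hne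
  have hk1 : ∀ b ∈ B, b.Nonempty := fun b hb =>
    Finset.card_pos.1 (by rw [hB.1 b hb]; omega)
  -- every block meets b₁ or b₂
  have hmeet : ∀ b ∈ B, (b ∩ b₁).Nonempty ∨ (b ∩ b₂).Nonempty := by
    intro b hb
    by_contra hcon
    push_neg at hcon
    have hd1 : Disjoint b b₁ := Finset.disjoint_iff_inter_eq_empty.2 hcon.1
    have hd2 : Disjoint b b₂ := Finset.disjoint_iff_inter_eq_empty.2 hcon.2
    have hbne1 : b ≠ b₁ := by
      rintro rfl; exact (hk1 b hb).ne_empty (by simpa using disjoint_self.1 hd1)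
    have hbne2 : b ≠ b₂ := by
      rintro rfl; exact (hk1 b hb).ne_empty (by simpa using disjoint_self.1 hd2)
    have hP3 : IsPPC B (insert b {b₁, b₂}) := by
      constructor
      · intro x hx
        simp only [Finset.mem_insert, Finset.mem_singleton] at hx
        rcases hx with rfl | rfl | rfl <;> assumption
      · intro x hx y hy hxy
        simp only [Finset.mem_insert, Finset.mem_singleton] at hx hy
        rcases hx with rfl | rfl | rfl <;> rcases hy with rfl | rfl | rfl <;>
          first
          | exact absurd rfl hxy
          | assumption
          | exact hd1.symm
          | exact hd2.symm
          | exact hdisj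
          | exact hdisj.symm
    have := hmax _ hP3
    rw [Finset.card_insert_of_notMem (by simp [hbne1, hbne2]),
      Finset.card_insert_of_notMem (by simp [hne]), Finset.card_singleton] at this
    omega
  set M := B.filter (fun b => (b ∩ b₁).Nonempty ∧ (b ∩ b₂).Nonempty) with hM
  set A₁ := B.filter (fun b => b ≠ b₁ ∧ (b ∩ b₁).Nonempty ∧ b ∩ b₂ = ∅) with hA₁
  set A₂ := B.filter (fun b => b ≠ b₂ ∧ (b ∩ b₂).Nonempty ∧ b ∩ b₁ = ∅) with hA₂
  have hsub : B ⊆ {b₁, b₂} ∪ M ∪ A₁ ∪ A₂ := by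
    intro b hb
    simp only [Finset.mem_union, Finset.mem_insert, Finset.mem_singleton, hM, hA₁, hA₂,
      Finset.mem_filter]
    by_cases e1 : b = b₁
    · tauto
    by_cases e2 : b = b₂
    · tauto
    rcases hmeet b hb with hm1 | hm2
    · by_cases hm2 : (b ∩ b₂).Nonempty
      · tauto
      · rw [Finset.not_nonempty_iff_eq_empty] at hm2; tauto
    · by_cases hm1 : (b ∩ b₁).Nonempty
      · tauto
      · rw [Finset.not_nonempty_iff_eq_empty] at hm1; tauto
  have hMcard : M.card ≤ k ^ 2 := by
    have : M.card ≤ (b₁ ×ˢ b₂).card := by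
      apply Finset.card_le_card_of_injOn
        (fun b => (if h : (b ∩ b₁).Nonempty then (b ∩ b₁).min' h else 0,
          if h : (b ∩ b₂).Nonempty then (b ∩ b₂).min' h else 0))
      · intro b hb
        simp only [hM, Finset.mem_coe, Finset.mem_filter] at hb
        obtain ⟨hbB, hn1, hn2⟩ := hb
        dsimp only
        rw [dif_pos hn1, dif_pos hn2, Finset.mem_coe, Finset.mem_product]
        exact ⟨Finset.mem_of_mem_inter_right ((b ∩ b₁).min'_mem hn1),
          Finset.mem_of_mem_inter_right ((b ∩ b₂).min'_mem hn2)⟩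
      · intro a ha a' ha' heq
        simp only [Finset.mem_coe, hM, Finset.mem_filter] at ha ha'
        obtain ⟨haB, ha1, ha2⟩ := ha
        obtain ⟨ha'B, ha'1, ha'2⟩ := ha'
        dsimp only at heq
        rw [dif_pos ha1, dif_pos ha2, dif_pos ha'1, dif_pos ha'2] at heq
        by_contra hne'
        set x := (a ∩ b₁).min' ha1 with hx
        set y := (a ∩ b₂).min' ha2 with hy
        have hxa : x ∈ a ∩ b₁ := (a ∩ b₁).min'_mem ha1
        have hya : y ∈ a ∩ b₂ := (a ∩ b₂).min'_mem ha2
        rw [Prod.mk.injEq] at heq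
        have hxa' : x ∈ a' ∩ b₁ := by
          rw [heq.1]; exact (a' ∩ b₁).min'_mem ha'1
        have hya' : y ∈ a' ∩ b₂ := by
          rw [heq.2]; exact (a' ∩ b₂).min'_mem ha'2
        have hxy : x ≠ y := by
          intro h
          exact Finset.disjoint_left.1 hdisj (Finset.mem_of_mem_inter_right hxa)
            (h ▸ Finset.mem_of_mem_inter_right hya)
        have hsub2 : ({x, y} : Finset (Fin v)) ⊆ a ∩ a' := by
          intro z hz
          simp only [Finset.mem_insert, Finset.mem_singleton] at hz
          rcases hz with rfl | rfl
          · exact Finset.mem_inter.2 ⟨Finset.mem_of_mem_inter_left hxa,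
              Finset.mem_of_mem_inter_left hxa'⟩
          · exact Finset.mem_inter.2 ⟨Finset.mem_of_mem_inter_left hya,
              Finset.mem_of_mem_inter_left hya'⟩
        have h2le : 2 ≤ (a ∩ a').card := by
          calc 2 = ({x, y} : Finset (Fin v)).card := by
                rw [Finset.card_insert_of_notMem (by simp [hxy]), Finset.card_singleton]
            _ ≤ (a ∩ a').card := Finset.card_le_card hsub2
        have := hB.2 a haB a' ha'B hne'
        omega
    calc M.card ≤ (b₁ ×ˢ b₂).card := this
      _ = k ^ 2 := by
        rw [Finset.card_product, hB.1 b₁ h1, hB.1 b₂ h2, sq]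
  have hA1card : A₁.card ≤ (v - 2 * k) / (k - 1) :=
    side_bound hk hv hB hmax h1 h2 hdisj
  have hA2card : A₂.card ≤ (v - 2 * k) / (k - 1) :=
    side_bound hk hv hB hmax h2 h1 hdisj.symm
  have hca : B.card ≤ ({b₁, b₂} : Finset (Finset (Fin v))).card + M.card + A₁.card + A₂.card := by
    calc B.card ≤ ({b₁, b₂} ∪ M ∪ A₁ ∪ A₂).card := Finset.card_le_card hsub
      _ ≤ ({b₁, b₂} ∪ M ∪ A₁).card + A₂.card := Finset.card_union_le _ _
      _ ≤ ({b₁, b₂} ∪ M).card + A₁.card + A₂.card := by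
          have := Finset.card_union_le ({b₁, b₂} ∪ M) A₁; omega
      _ ≤ ({b₁, b₂} : Finset (Finset (Fin v))).card + M.card + A₁.card + A₂.card := by
          have := Finset.card_union_le ({b₁, b₂} : Finset (Finset (Fin v))) M; omega
  have hpair : ({b₁, b₂} : Finset (Finset (Fin v))).card ≤ 2 :=
    Finset.card_insert_le _ _ |>.trans (by simp)
  omega

lemma lower_aux (k t : ℕ) (hk : 2 ≤ k) (hkt : k ≤ t) (v : ℕ) (hv : v = t * (k - 1) + 2) :
    ∃ B : Finset (Finset (Fin v)), IsPacking v k B ∧ MaxPPCSize B 2 ∧ B.card = 2 * t := by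
  classical
  haveI : NeZero t := ⟨by omega⟩
  have hkk : k - 1 ≤ t := by omega
  have hkk1 : 0 < k - 1 := by omega
  let e : (Fin t × Fin (k - 1)) ⊕ Fin 2 ≃ Fin v :=
    ((Equiv.sumCongr finProdFinEquiv (Equiv.refl (Fin 2))).trans finSumFinEquiv).trans
      (finCongr hv.symm)
  let f : (Fin t × Fin (k - 1)) ⊕ Fin 2 ↪ Fin v := e.toEmbedding
  let C : Fin t → Finset ((Fin t × Fin (k - 1)) ⊕ Fin 2) := fun i =>
    insert (Sum.inr 0) ((Finset.univ : Finset (Fin (k - 1))).image fun j => Sum.inl (i, j))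
  let D : Fin t → Finset ((Fin t × Fin (k - 1)) ⊕ Fin 2) := fun i =>
    insert (Sum.inr 1) ((Finset.univ : Finset (Fin (k - 1))).image fun j =>
      Sum.inl (i + Fin.castLE hkk j, j))
  have memC : ∀ (x) (i), x ∈ C i ↔ x = Sum.inr 0 ∨ ∃ j, x = Sum.inl (i, j) := by
    intro x i
    simp only [C, Finset.mem_insert, Finset.mem_image, Finset.mem_univ, true_and]
    constructor
    · rintro (rfl | ⟨j, rfl⟩)
      · exact Or.inl rfl
      · exact Or.inr ⟨j, rfl⟩
    · rintro (rfl | ⟨j, rfl⟩)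
      · exact Or.inl rfl
      · exact Or.inr ⟨j, rfl⟩
  have memD : ∀ (x) (i), x ∈ D i ↔ x = Sum.inr 1 ∨
      ∃ j, x = Sum.inl (i + Fin.castLE hkk j, j) := by
    intro x i
    simp only [D, Finset.mem_insert, Finset.mem_image, Finset.mem_univ, true_and]
    constructor
    · rintro (rfl | ⟨j, rfl⟩)
      · exact Or.inl rfl
      · exact Or.inr ⟨j, rfl⟩
    · rintro (rfl | ⟨j, rfl⟩)
      · exact Or.inl rfl
      · exact Or.inr ⟨j, rfl⟩
  have cardC : ∀ i, (C i).card = k := by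
    intro i
    have hinj : Function.Injective
        (fun j : Fin (k - 1) => (Sum.inl (i, j) : (Fin t × Fin (k - 1)) ⊕ Fin 2)) := by
      intro a b h; simpa using h
    have hCi : C i = insert (Sum.inr 0)
        ((Finset.univ : Finset (Fin (k - 1))).image fun j => Sum.inl (i, j)) := rfl
    rw [hCi, Finset.card_insert_of_notMem (by simp), Finset.card_image_of_injective _ hinj,
      Finset.card_univ, Fintype.card_fin]
    omega
  have cardD : ∀ i, (D i).card = k := by
    intro i
    have hinj : Function.Injective (fun j : Fin (k - 1) =>
        (Sum.inl (i + Fin.castLE hkk j, j) : (Fin t × Fin (k - 1)) ⊕ Fin 2)) := by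
      intro a b h
      simp only [Sum.inl.injEq, Prod.mk.injEq] at h
      exact h.2
    have hDi : D i = insert (Sum.inr 1)
        ((Finset.univ : Finset (Fin (k - 1))).image fun j =>
          Sum.inl (i + Fin.castLE hkk j, j)) := rfl
    rw [hDi, Finset.card_insert_of_notMem (by simp), Finset.card_image_of_injective _ hinj,
      Finset.card_univ, Fintype.card_fin]
    omega
  -- intersection lemmas
  have hCC : ∀ i i' : Fin t, i ≠ i' → (C i ∩ C i').card ≤ 1 := by
    intro i i' hne
    rw [Finset.card_le_one]
    intro x hx y hy
    rw [Finset.mem_inter, memC, memC] at hx hy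
    obtain ⟨hx1, hx2⟩ := hx
    obtain ⟨hy1, hy2⟩ := hy
    rcases hx1 with rfl | ⟨j, rfl⟩
    · rcases hy1 with rfl | ⟨j', rfl⟩
      · rfl
      · rcases hy2 with h | ⟨j'', h⟩
        · exact absurd h (by simp)
        · simp only [Sum.inl.injEq, Prod.mk.injEq] at h
          exact absurd h.1 hne
    · rcases hx2 with h | ⟨j'', h⟩
      · exact absurd h (by simp)
      · simp only [Sum.inl.injEq, Prod.mk.injEq] at h
        exact absurd h.1 hne
  have hDD : ∀ i i' : Fin t, i ≠ i' → (D i ∩ D i').card ≤ 1 := by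
    intro i i' hne
    rw [Finset.card_le_one]
    intro x hx y hy
    rw [Finset.mem_inter, memD, memD] at hx hy
    obtain ⟨hx1, hx2⟩ := hx
    obtain ⟨hy1, hy2⟩ := hy
    rcases hx1 with rfl | ⟨j, rfl⟩
    · rcases hy1 with rfl | ⟨j', rfl⟩
      · rfl
      · rcases hy2 with h | ⟨j'', h⟩
        · exact absurd h (by simp)
        · simp only [Sum.inl.injEq, Prod.mk.injEq] at h
          obtain ⟨h1, h2⟩ := h
          subst h2
          exact absurd (add_right_cancel h1) hne
    · rcases hx2 with h | ⟨j'', h⟩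
      · exact absurd h (by simp)
      · simp only [Sum.inl.injEq, Prod.mk.injEq] at h
        obtain ⟨h1, h2⟩ := h
        subst h2
        exact absurd (add_right_cancel h1) hne
  have hCD : ∀ i i' : Fin t, (C i ∩ D i').card ≤ 1 := by
    intro i i'
    rw [Finset.card_le_one]
    intro x hx y hy
    rw [Finset.mem_inter, memC, memD] at hx hy
    obtain ⟨hx1, hx2⟩ := hx
    obtain ⟨hy1, hy2⟩ := hy
    rcases hx1 with rfl | ⟨jx, rfl⟩
    · rcases hx2 with h | ⟨j, h⟩ <;> exact absurd h (by simp)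
    rcases hx2 with h | ⟨jx', hx'⟩
    · exact absurd h (by simp)
    rcases hy1 with rfl | ⟨jy, rfl⟩
    · rcases hy2 with h | ⟨j, h⟩ <;> exact absurd h (by simp)
    rcases hy2 with h | ⟨jy', hy'⟩
    · exact absurd h (by simp)
    simp only [Sum.inl.injEq, Prod.mk.injEq] at hx' hy'
    obtain ⟨hxi, hxj⟩ := hx'
    obtain ⟨hyi, hyj⟩ := hy'
    subst hxj
    subst hyj
    have heq2 : i' + Fin.castLE hkk jx = i' + Fin.castLE hkk jy := by
      rw [← hxi, ← hyi]
    have hj : jx = jy := by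
      have hcast := add_left_cancel heq2
      exact Fin.ext (by simpa using congrArg Fin.val hcast)
    rw [hj]
  -- the blocks
  set 𝓑 : Finset (Finset ((Fin t × Fin (k - 1)) ⊕ Fin 2)) :=
    Finset.univ.image C ∪ Finset.univ.image D with h𝓑
  set B : Finset (Finset (Fin v)) := 𝓑.image (Finset.map f) with hB
  have hmem𝓑 : ∀ s ∈ 𝓑, (∃ i, s = C i) ∨ (∃ i, s = D i) := by
    intro s hs
    rw [h𝓑, Finset.mem_union, Finset.mem_image, Finset.mem_image] at hs
    rcases hs with ⟨i, _, rfl⟩ | ⟨i, _, rfl⟩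
    · exact Or.inl ⟨i, rfl⟩
    · exact Or.inr ⟨i, rfl⟩
  have hpair : ∀ s ∈ 𝓑, ∀ s' ∈ 𝓑, s ≠ s' → (s ∩ s').card ≤ 1 := by
    intro s hs s' hs' hne
    rcases hmem𝓑 s hs with ⟨i, rfl⟩ | ⟨i, rfl⟩ <;>
      rcases hmem𝓑 s' hs' with ⟨i', rfl⟩ | ⟨i', rfl⟩
    · exact hCC i i' (fun h => hne (by rw [h]))
    · exact hCD i i'
    · rw [Finset.inter_comm]; exact hCD i' i
    · exact hDD i i' (fun h => hne (by rw [h]))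
  have hPack : IsPacking v k B := by
    constructor
    · intro b hb
      rw [hB, Finset.mem_image] at hb
      obtain ⟨s, hs, rfl⟩ := hb
      rw [Finset.card_map]
      rcases hmem𝓑 s hs with ⟨i, rfl⟩ | ⟨i, rfl⟩
      · exact cardC i
      · exact cardD i
    · intro b hb b' hb' hne
      rw [hB, Finset.mem_image] at hb hb'
      obtain ⟨s, hs, rfl⟩ := hb
      obtain ⟨s', hs', rfl⟩ := hb'
      rw [← Finset.map_inter, Finset.card_map]
      exact hpair s hs s' hs' (fun h => hne (by rw [h]))
  -- every block contains a marked point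
  have hmark : ∀ b ∈ B, f (Sum.inr 0) ∈ b ∨ f (Sum.inr 1) ∈ b := by
    intro b hb
    rw [hB, Finset.mem_image] at hb
    obtain ⟨s, hs, rfl⟩ := hb
    rcases hmem𝓑 s hs with ⟨i, rfl⟩ | ⟨i, rfl⟩
    · exact Or.inl (Finset.mem_map_of_mem f (by rw [memC]; exact Or.inl rfl))
    · exact Or.inr (Finset.mem_map_of_mem f (by rw [memD]; exact Or.inl rfl))
  have hmax : ∀ P, IsPPC B P → P.card ≤ 2 := by
    intro P hP
    have hfil : ∀ z : Fin v, (P.filter (fun b => z ∈ b)).card ≤ 1 := by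
      intro z
      rw [Finset.card_le_one]
      intro b hb b' hb'
      rw [Finset.mem_filter] at hb hb'
      by_contra hne
      exact Finset.disjoint_left.1 (hP.2 b hb.1 b' hb'.1 hne) hb.2 hb'.2
    have hsub : P ⊆ P.filter (fun b => f (Sum.inr 0) ∈ b) ∪
        P.filter (fun b => f (Sum.inr 1) ∈ b) := by
      intro b hb
      rw [Finset.mem_union, Finset.mem_filter, Finset.mem_filter]
      rcases hmark b (hP.1 hb) with h | h
      · exact Or.inl ⟨hb, h⟩
      · exact Or.inr ⟨hb, h⟩
    calc P.card ≤ _ := Finset.card_le_card hsub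
      _ ≤ (P.filter (fun b => f (Sum.inr 0) ∈ b)).card +
          (P.filter (fun b => f (Sum.inr 1) ∈ b)).card := Finset.card_union_le _ _
      _ ≤ 2 := by have := hfil (f (Sum.inr 0)); have := hfil (f (Sum.inr 1)); omega
  -- a PPC of size 2
  let i0 : Fin t := ⟨0, by omega⟩
  let i1 : Fin t := ⟨1, by omega⟩
  have hC0D1 : Disjoint (C i0) (D i1) := by
    rw [Finset.disjoint_left]
    intro x hx hx'
    rw [memC] at hx
    rw [memD] at hx'
    rcases hx with rfl | ⟨j, rfl⟩
    · rcases hx' with h | ⟨j', h⟩ <;> simp at h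
    · rcases hx' with h | ⟨j', h⟩
      · simp at h
      · simp only [Sum.inl.injEq, Prod.mk.injEq] at h
        obtain ⟨h1, h2⟩ := h
        subst h2
        have hval := congrArg Fin.val h1
        rw [Fin.val_add] at hval
        simp only [i0, i1, Fin.castLE] at hval
        have hj : (j : ℕ) < k - 1 := j.2
        have : (1 + (j : ℕ)) % t = 1 + (j : ℕ) := Nat.mod_eq_of_lt (by omega)
        omega
  have hC0B : (C i0).map f ∈ B := by
    rw [hB, Finset.mem_image]
    exact ⟨C i0, by rw [h𝓑, Finset.mem_union]; exact Or.inl (Finset.mem_image_of_mem _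
      (Finset.mem_univ _)), rfl⟩
  have hD1B : (D i1).map f ∈ B := by
    rw [hB, Finset.mem_image]
    exact ⟨D i1, by rw [h𝓑, Finset.mem_union]; exact Or.inr (Finset.mem_image_of_mem _
      (Finset.mem_univ _)), rfl⟩
  have hCDne : (C i0).map f ≠ (D i1).map f := by
    intro h
    have h0 : f (Sum.inr 0) ∈ (C i0).map f :=
      Finset.mem_map_of_mem f (by rw [memC]; exact Or.inl rfl)
    rw [h] at h0
    obtain ⟨x, hx, hfx⟩ := Finset.mem_map.1 h0
    have : x = Sum.inr 0 := f.injective hfx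
    subst this
    rw [memD] at hx
    rcases hx with h' | ⟨j', h'⟩ <;> simp at h'
  have hPPC2 : IsPPC B ({(C i0).map f, (D i1).map f} : Finset (Finset (Fin v))) := by
    constructor
    · intro b hb
      simp only [Finset.mem_insert, Finset.mem_singleton] at hb
      rcases hb with rfl | rfl
      · exact hC0B
      · exact hD1B
    · intro b hb b' hb' hne
      simp only [Finset.mem_insert, Finset.mem_singleton] at hb hb'
      rcases hb with rfl | rfl <;> rcases hb' with rfl | rfl <;>
        first
        | exact absurd rfl hne
        | exact (Finset.disjoint_map f).2 hC0D1
        | exact ((Finset.disjoint_map f).2 hC0D1).symm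
  -- counting
  have hCinj : Function.Injective C := by
    intro i i' h
    have : (Sum.inl (i, (⟨0, hkk1⟩ : Fin (k - 1))) :
        (Fin t × Fin (k - 1)) ⊕ Fin 2) ∈ C i' := by
      rw [← h, memC]; exact Or.inr ⟨_, rfl⟩
    rw [memC] at this
    rcases this with h' | ⟨j', h'⟩
    · simp at h'
    · simp only [Sum.inl.injEq, Prod.mk.injEq] at h'
      exact h'.1
  have hDinj : Function.Injective D := by
    intro i i' h
    have : (Sum.inl (i + Fin.castLE hkk (⟨0, hkk1⟩ : Fin (k - 1)), (⟨0, hkk1⟩ : Fin (k - 1))) :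
        (Fin t × Fin (k - 1)) ⊕ Fin 2) ∈ D i' := by
      rw [← h, memD]; exact Or.inr ⟨_, rfl⟩
    rw [memD] at this
    rcases this with h' | ⟨j', h'⟩
    · simp at h'
    · simp only [Sum.inl.injEq, Prod.mk.injEq] at h'
      obtain ⟨h1, h2⟩ := h'
      subst h2
      exact add_right_cancel h1
  have hdisjCD : Disjoint (Finset.univ.image C) (Finset.univ.image D) := by
    rw [Finset.disjoint_left]
    rintro s hs hs'
    obtain ⟨i, _, rfl⟩ := Finset.mem_image.1 hs
    obtain ⟨i', _, h⟩ := Finset.mem_image.1 hs'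
    have : (Sum.inr 0 : (Fin t × Fin (k - 1)) ⊕ Fin 2) ∈ D i' := by
      rw [h, memC]; exact Or.inl rfl
    rw [memD] at this
    rcases this with h' | ⟨j', h'⟩ <;> simp at h'
  have hcard : B.card = 2 * t := by
    rw [hB, Finset.card_image_of_injective _ (Finset.map_injective f), h𝓑,
      Finset.card_union_of_disjoint hdisjCD,
      Finset.card_image_of_injective _ hCinj, Finset.card_image_of_injective _ hDinj,
      Finset.card_univ, Fintype.card_fin]
    omega
  refine ⟨B, hPack, ⟨⟨{(C i0).map f, (D i1).map f}, hPPC2, ?_⟩, hmax⟩, hcard⟩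
  rw [Finset.card_insert_of_notMem (by simp [hCDne]), Finset.card_singleton]

end Aux

theorem stmt19 (k v : ℕ) (hk : 2 ≤ k) (hmod : v % (k - 1) = 2 % (k - 1))
    (hv : k * (k - 1) ^ 2 + 2 * k ≤ v) :
    (2 * v - 4) / (k - 1) ≤ beta 2 v k ∧
      beta 2 v k ≤ (2 * v - 4) / (k - 1) + k ^ 2 - 2 := by
  have hd : 0 < k - 1 := by omega
  have hv2 : 2 ≤ v := by nlinarith
  have hdvd : (k - 1) ∣ v - 2 := (Nat.modEq_iff_dvd' hv2).1 hmod.symm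
  set t := (v - 2) / (k - 1) with ht
  have htd : t * (k - 1) = v - 2 := Nat.div_mul_cancel hdvd
  have hveq : v = t * (k - 1) + 2 := by omega
  have hkt : k ≤ t := by
    have : k * (k - 1) ≤ t * (k - 1) := by nlinarith
    exact Nat.le_of_mul_le_mul_right this hd
  have h2t : (2 * v - 4) / (k - 1) = 2 * t := by
    have e1 : (2 * t) * (k - 1) = 2 * (t * (k - 1)) := by ring
    have : 2 * v - 4 = (2 * t) * (k - 1) := by omega
    rw [this, Nat.mul_div_cancel _ hd]
  constructor
  · -- lower bound
    obtain ⟨B, hp, hm, hc⟩ := lower_aux k t hk hkt v hveq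
    rw [h2t]
    refine le_csSup ⟨Fintype.card (Finset (Fin v)), ?_⟩ ⟨B, hp, hm, hc⟩
    rintro b ⟨B', _, _, rfl⟩
    exact B'.card_le_univ.trans_eq (by simp)
  · -- upper bound
    refine csSup_le' ?_
    rintro b ⟨B, hp, hm, rfl⟩
    have := upper_main hk hv hp hm
    have hm2 : (v - 2 * k) / (k - 1) = t - 2 := by
      have e2 : (t - 2) * (k - 1) = t * (k - 1) - 2 * (k - 1) := by
        rw [Nat.sub_mul]
      have : v - 2 * k = (t - 2) * (k - 1) := by omega
      rw [this, Nat.mul_div_cancel _ hd]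
    have hk4 : 4 ≤ k ^ 2 := by nlinarith
    rw [h2t]
    omega
end
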